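/- arXiv:1910.08460 — 3 statements merged into one kernel-verified Lean document; each statement's English description precedes it below -/
import Mathlib

section
/- If δ'_j ≤ δ_j ≤ 2 δ'_j, where δ_j = ‖(|R_j|^{1/2} + g_j^{-1/2} P_j) E (|R_j|^{1/2} + g_j^{-1/2} P_j)‖_∞ and δ'_j = max(‖|R_j|^{1/2} E |R_j|^{1/2}‖_∞, g_j^{-1/2} ‖|R_j|^{1/2} E P_j‖_2, g_j^{-1} ‖P_j E P_j‖_2). That is, the two quantities δ_j and δ'_j satisfy δ'_j ≤ δ_j ≤ 2 δ'_j. -/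
set_option synthInstance.maxHeartbeats 1000000
set_option maxHeartbeats 1000000
set_option linter.unusedVariables false


open Matrix Finset

noncomputable def opNorm {d : ℕ} (A : Matrix (Fin d) (Fin d) ℝ) : ℝ :=
  ‖Matrix.toEuclideanCLM (𝕜 := ℝ) A‖

noncomputable def hsNorm {d : ℕ} (A : Matrix (Fin d) (Fin d) ℝ) : ℝ :=
  Real.sqrt (Matrix.trace (Aᵀ * A))

noncomputable def proj {d : ℕ} (u : Fin d → ℝ) : Matrix (Fin d) (Fin d) ℝ :=
  Matrix.vecMulVec u u

/-- `|R_j|^{1/2}` : square root of the absolute value of the reduced resolvent. -/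
noncomputable def sqrtAbsRes {d : ℕ} (lam : Fin d → ℝ) (u : Fin d → Fin d → ℝ)
    (j : Fin d) : Matrix (Fin d) (Fin d) ℝ :=
  ∑ k ∈ Finset.univ.filter (fun k => k ≠ j), (Real.sqrt |lam k - lam j|)⁻¹ • proj (u k)

/-- `|R_j|^{-1/2}`. -/
noncomputable def invSqrtAbsRes {d : ℕ} (lam : Fin d → ℝ) (u : Fin d → Fin d → ℝ)
    (j : Fin d) : Matrix (Fin d) (Fin d) ℝ :=
  ∑ k ∈ Finset.univ.filter (fun k => k ≠ j), Real.sqrt |lam k - lam j| • proj (u k)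

/-- the reduced resolvent `R_j`. -/
noncomputable def res {d : ℕ} (lam : Fin d → ℝ) (u : Fin d → Fin d → ℝ)
    (j : Fin d) : Matrix (Fin d) (Fin d) ℝ :=
  ∑ k ∈ Finset.univ.filter (fun k => k ≠ j), (lam k - lam j)⁻¹ • proj (u k)

/-- `δ_j`. -/
noncomputable def delta {d : ℕ} (lam : Fin d → ℝ) (u : Fin d → Fin d → ℝ) (j : Fin d)
    (gj : ℝ) (E : Matrix (Fin d) (Fin d) ℝ) : ℝ :=
  opNorm ((sqrtAbsRes lam u j + (Real.sqrt gj)⁻¹ • proj (u j)) * E *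
    (sqrtAbsRes lam u j + (Real.sqrt gj)⁻¹ • proj (u j)))

/-- `δ'_j`. -/
noncomputable def delta' {d : ℕ} (lam : Fin d → ℝ) (u : Fin d → Fin d → ℝ) (j : Fin d)
    (gj : ℝ) (E : Matrix (Fin d) (Fin d) ℝ) : ℝ :=
  max (opNorm (sqrtAbsRes lam u j * E * sqrtAbsRes lam u j))
    (max ((Real.sqrt gj)⁻¹ * hsNorm (sqrtAbsRes lam u j * E * proj (u j)))
      (gj⁻¹ * hsNorm (proj (u j) * E * proj (u j))))


noncomputable def n2 {d : ℕ} (x : Fin d → ℝ) : ℝ := Real.sqrt (x ⬝ᵥ x)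

lemma dot_self_nonneg {d : ℕ} (x : Fin d → ℝ) : 0 ≤ x ⬝ᵥ x :=
  Finset.sum_nonneg fun _ _ => mul_self_nonneg _

lemma n2_sq {d : ℕ} (x : Fin d → ℝ) : n2 x ^ 2 = x ⬝ᵥ x := by
  rw [n2, Real.sq_sqrt (dot_self_nonneg x)]

lemma n2_nonneg {d : ℕ} (x : Fin d → ℝ) : 0 ≤ n2 x := Real.sqrt_nonneg _

lemma dot_CS {d : ℕ} (x y : Fin d → ℝ) : |x ⬝ᵥ y| ≤ n2 x * n2 y := by
  have h := Finset.sum_mul_sq_le_sq_mul_sq Finset.univ x y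
  have h2 : (x ⬝ᵥ y)^2 ≤ (n2 x * n2 y)^2 := by
    rw [mul_pow, n2_sq, n2_sq, dotProduct, dotProduct, dotProduct]
    simpa [sq] using h
  have h3 := abs_le_of_sq_le_sq' h2 (mul_nonneg (n2_nonneg x) (n2_nonneg y))
  exact abs_le.mpr h3

lemma vmv_mul_vmv {d : ℕ} (a b c e : Fin d → ℝ) :
    vecMulVec a b * vecMulVec c e = (b ⬝ᵥ c) • vecMulVec a e := by
  ext i l
  simp only [mul_apply, vecMulVec_apply, Matrix.smul_apply, smul_eq_mul, dotProduct, Finset.sum_mul,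
    Finset.mul_sum]
  apply Finset.sum_congr rfl
  intro m _
  ring

lemma mul_vmv {d : ℕ} (A : Matrix (Fin d) (Fin d) ℝ) (b c : Fin d → ℝ) :
    A * vecMulVec b c = vecMulVec (A *ᵥ b) c := by
  ext i l
  simp only [mul_apply, vecMulVec_apply, mulVec, dotProduct, Finset.sum_mul]
  exact Finset.sum_congr rfl fun m _ => by ring

lemma vmv_transpose {d : ℕ} (a b : Fin d → ℝ) :
    (vecMulVec a b)ᵀ = vecMulVec b a := by
  ext i l; simp [vecMulVec_apply, mul_comm]

lemma vmv_mulVec {d : ℕ} (a b x : Fin d → ℝ) :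
    vecMulVec a b *ᵥ x = (b ⬝ᵥ x) • a := by
  ext i
  simp only [mulVec, dotProduct, vecMulVec_apply, Pi.smul_apply, smul_eq_mul, Finset.sum_mul,
    Finset.mul_sum]
  exact Finset.sum_congr rfl fun m _ => by ring

lemma trace_vmv {d : ℕ} (a b : Fin d → ℝ) :
    Matrix.trace (vecMulVec a b) = a ⬝ᵥ b := by
  simp [Matrix.trace, vecMulVec_apply, dotProduct, Matrix.diag]

lemma hsNorm_vmv {d : ℕ} (w v : Fin d → ℝ) :
    hsNorm (vecMulVec w v) = n2 w * n2 v := by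
  rw [hsNorm, vmv_transpose, vmv_mul_vmv, Matrix.trace_smul, trace_vmv, smul_eq_mul, n2, n2,
    ← Real.sqrt_mul (dot_self_nonneg w)]

lemma n2_smul {d : ℕ} (c : ℝ) (x : Fin d → ℝ) : n2 (c • x) = |c| * n2 x := by
  rw [n2, smul_dotProduct, dotProduct_smul, smul_eq_mul, smul_eq_mul, ← mul_assoc, n2,
    Real.sqrt_mul (mul_self_nonneg c), Real.sqrt_mul_self_eq_abs]

lemma norm_equiv_symm {d : ℕ} (x : Fin d → ℝ) :
    ‖(WithLp.equiv 2 (Fin d → ℝ)).symm x‖ = n2 x := by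
  rw [EuclideanSpace.norm_eq, n2, dotProduct]
  congr 1
  exact Finset.sum_congr rfl fun _ _ => by simp [sq, Real.norm_eq_abs, abs_mul_abs_self]

lemma clm_apply {d : ℕ} (A : Matrix (Fin d) (Fin d) ℝ) (x : Fin d → ℝ) :
    Matrix.toEuclideanCLM (𝕜 := ℝ) A ((WithLp.equiv 2 _).symm x)
      = (WithLp.equiv 2 (Fin d → ℝ)).symm (A *ᵥ x) := by
  exact Matrix.toEuclideanCLM_toLp A x

lemma mulVec_n2_le {d : ℕ} (A : Matrix (Fin d) (Fin d) ℝ) (x : Fin d → ℝ) :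
    n2 (A *ᵥ x) ≤ opNorm A * n2 x := by
  have := (Matrix.toEuclideanCLM (𝕜 := ℝ) A).le_opNorm ((WithLp.equiv 2 (Fin d → ℝ)).symm x)
  rwa [clm_apply, norm_equiv_symm, norm_equiv_symm] at this

lemma opNorm_le_bound {d : ℕ} (A : Matrix (Fin d) (Fin d) ℝ) (K : ℝ) (hK : 0 ≤ K)
    (h : ∀ x, n2 (A *ᵥ x) ≤ K * n2 x) : opNorm A ≤ K := by
  apply ContinuousLinearMap.opNorm_le_bound _ hK
  intro y
  have := h (WithLp.equiv 2 (Fin d → ℝ) y)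
  rwa [← norm_equiv_symm, ← clm_apply, Equiv.symm_apply_apply, ← norm_equiv_symm (d := d),
    Equiv.symm_apply_apply] at this

lemma opNorm_nonneg {d : ℕ} (A : Matrix (Fin d) (Fin d) ℝ) : 0 ≤ opNorm A := norm_nonneg _

lemma opNorm_mul_le {d : ℕ} (A B : Matrix (Fin d) (Fin d) ℝ) :
    opNorm (A * B) ≤ opNorm A * opNorm B := by
  unfold opNorm
  rw [_root_.map_mul]
  exact norm_mul_le _ _

lemma opNorm_add_le {d : ℕ} (A B : Matrix (Fin d) (Fin d) ℝ) :
    opNorm (A + B) ≤ opNorm A + opNorm B := by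
  unfold opNorm; rw [_root_.map_add]; exact norm_add_le _ _

lemma opNorm_smul {d : ℕ} (c : ℝ) (A : Matrix (Fin d) (Fin d) ℝ) :
    opNorm (c • A) = |c| * opNorm A := by
  unfold opNorm
  rw [_root_.map_smul]
  have := norm_smul c (Matrix.toEuclideanCLM (𝕜 := ℝ) A)
  rw [this, Real.norm_eq_abs]

lemma dot_mulVec_mulVec {d : ℕ} (A B : Matrix (Fin d) (Fin d) ℝ) (x y : Fin d → ℝ) :
    (A *ᵥ x) ⬝ᵥ (B *ᵥ y) = x ⬝ᵥ ((Aᵀ * B) *ᵥ y) := by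
  rw [← Matrix.mulVec_mulVec]
  conv_rhs => rw [Matrix.dotProduct_mulVec, Matrix.vecMul_transpose]

lemma opNorm_vmv {d : ℕ} (w v : Fin d → ℝ) :
    opNorm (vecMulVec w v) = n2 w * n2 v := by
  refine le_antisymm ?_ ?_
  · refine opNorm_le_bound _ _ (mul_nonneg (n2_nonneg w) (n2_nonneg v)) fun x => ?_
    rw [vmv_mulVec, n2_smul]
    have h := dot_CS v x
    have hw := n2_nonneg w
    nlinarith [n2_nonneg x, n2_nonneg v, abs_nonneg (v ⬝ᵥ x)]
  · by_cases h : v ⬝ᵥ v = 0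
    · have : n2 v = 0 := by rw [n2, h, Real.sqrt_zero]
      rw [this, mul_zero]
      exact opNorm_nonneg _
    · have hvv : 0 < v ⬝ᵥ v := lt_of_le_of_ne (dot_self_nonneg v) (Ne.symm h)
      have hnv : 0 < n2 v := Real.sqrt_pos.mpr hvv
      have h1 := mulVec_n2_le (vecMulVec w v) v
      rw [vmv_mulVec, n2_smul, abs_of_nonneg (dot_self_nonneg v)] at h1
      have h2 : v ⬝ᵥ v = n2 v ^ 2 := (n2_sq v).symm
      nlinarith [n2_nonneg w, opNorm_nonneg (vecMulVec w v)]

lemma opNorm_symm_idem_le_one {d : ℕ} (R : Matrix (Fin d) (Fin d) ℝ)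
    (hRt : Rᵀ = R) (hRR : R * R = R) : opNorm R ≤ 1 := by
  refine opNorm_le_bound _ _ zero_le_one fun x => ?_
  have key : (R *ᵥ x) ⬝ᵥ (R *ᵥ x) = x ⬝ᵥ (R *ᵥ x) := by
    rw [dot_mulVec_mulVec, hRt, hRR]
  have hCS := dot_CS x (R *ᵥ x)
  have ht : n2 (R *ᵥ x) ^ 2 = x ⬝ᵥ (R *ᵥ x) := by rw [n2_sq]; exact key
  have h1 : x ⬝ᵥ (R *ᵥ x) ≤ n2 x * n2 (R *ᵥ x) := (le_abs_self _).trans hCS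
  have h2 := n2_nonneg (R *ᵥ x)
  nlinarith [n2_nonneg x]

lemma opNorm_orth_add_le {d : ℕ} (X Y R : Matrix (Fin d) (Fin d) ℝ)
    (hXY : Xᵀ * Y = 0) (hRt : Rᵀ = R) (hRR : R * R = R)
    (hXR : X * R = 0) (hYR : Y * R = Y) :
    opNorm (X + Y) ≤ max (opNorm X) (opNorm Y) := by
  set K := max (opNorm X) (opNorm Y) with hK
  have hK0 : 0 ≤ K := le_trans (opNorm_nonneg X) (le_max_left _ _)
  refine opNorm_le_bound _ _ hK0 fun x => ?_
  set q : Fin d → ℝ := x - R *ᵥ x with hq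
  set r : Fin d → ℝ := R *ᵥ x with hr
  have hXq : X *ᵥ q = X *ᵥ x := by
    rw [hq, Matrix.mulVec_sub, Matrix.mulVec_mulVec, hXR, Matrix.zero_mulVec, sub_zero]
  have hYr : Y *ᵥ r = Y *ᵥ x := by
    rw [hr, Matrix.mulVec_mulVec, hYR]
  have cross1 : (X *ᵥ x) ⬝ᵥ (Y *ᵥ x) = 0 := by
    rw [dot_mulVec_mulVec, hXY, Matrix.zero_mulVec, dotProduct_zero]
  have crossq : q ⬝ᵥ r = 0 := by
    rw [hq, sub_dotProduct]
    have h1 : r ⬝ᵥ r = x ⬝ᵥ r := by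
      rw [hr, dot_mulVec_mulVec, hRt, hRR]
    rw [h1, sub_self]
  have hsum : q ⬝ᵥ q + r ⬝ᵥ r = x ⬝ᵥ x := by
    have hx : x = q + r := by rw [hq]; abel
    calc q ⬝ᵥ q + r ⬝ᵥ r = (q + r) ⬝ᵥ (q + r) := by
          rw [add_dotProduct, dotProduct_add, dotProduct_add, crossq,
            dotProduct_comm r q, crossq]
          ring
      _ = x ⬝ᵥ x := by rw [← hx]
  have hXb : n2 (X *ᵥ x) ≤ K * n2 q := by
    rw [← hXq]
    exact (mulVec_n2_le X q).trans
      (mul_le_mul_of_nonneg_right (le_max_left _ _) (n2_nonneg q))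
  have hYb : n2 (Y *ᵥ x) ≤ K * n2 r := by
    rw [← hYr]
    exact (mulVec_n2_le Y r).trans
      (mul_le_mul_of_nonneg_right (le_max_right _ _) (n2_nonneg r))
  have hS : ((X + Y) *ᵥ x) ⬝ᵥ ((X + Y) *ᵥ x) = (X *ᵥ x) ⬝ᵥ (X *ᵥ x) + (Y *ᵥ x) ⬝ᵥ (Y *ᵥ x) := by
    rw [Matrix.add_mulVec, add_dotProduct, dotProduct_add, dotProduct_add,
      cross1, dotProduct_comm (Y *ᵥ x) (X *ᵥ x), cross1]
    ring
  have e1 : (X *ᵥ x) ⬝ᵥ (X *ᵥ x) ≤ (K * n2 q) ^ 2 := by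
    rw [← n2_sq (X *ᵥ x)]
    have := n2_nonneg (X *ᵥ x); nlinarith
  have e2 : (Y *ᵥ x) ⬝ᵥ (Y *ᵥ x) ≤ (K * n2 r) ^ 2 := by
    rw [← n2_sq (Y *ᵥ x)]
    have := n2_nonneg (Y *ᵥ x); nlinarith
  have e3 : (K * n2 q) ^ 2 + (K * n2 r) ^ 2 = (K * n2 x) ^ 2 := by
    rw [mul_pow, mul_pow, mul_pow, n2_sq, n2_sq, n2_sq, ← mul_add, hsum]
  have hsq : ((X + Y) *ᵥ x) ⬝ᵥ ((X + Y) *ᵥ x) ≤ (K * n2 x) ^ 2 := by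
    rw [hS]; linarith
  have hfin : n2 ((X + Y) *ᵥ x) ≤ Real.sqrt ((K * n2 x) ^ 2) := Real.sqrt_le_sqrt hsq
  rwa [Real.sqrt_sq (mul_nonneg hK0 (n2_nonneg x))] at hfin

lemma key {d : ℕ} (S P E : Matrix (Fin d) (Fin d) ℝ) (w : Fin d → ℝ)
    (hP : P = vecMulVec w w) (hw : w ⬝ᵥ w = 1)
    (hSt : Sᵀ = S) (hSP : S * P = 0) (hPS : P * S = 0)
    (hEt : Eᵀ = E) (c : ℝ) (hc0 : 0 ≤ c) :
    (opNorm (S * E * S) ≤ opNorm ((S + c • P) * E * (S + c • P)) ∧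
      c * hsNorm (S * E * P) ≤ opNorm ((S + c • P) * E * (S + c • P)) ∧
      (c * c) * hsNorm (P * E * P) ≤ opNorm ((S + c • P) * E * (S + c • P))) ∧
    opNorm ((S + c • P) * E * (S + c • P)) ≤
      max (opNorm (S * E * S)) ((c * c) * hsNorm (P * E * P)) + c * hsNorm (S * E * P) := by
  set M := (S + c • P) * E * (S + c • P) with hM
  have hnw : n2 w = 1 := by rw [n2, hw, Real.sqrt_one]
  have hPt : Pᵀ = P := by rw [hP, vmv_transpose]
  have hPP : P * P = P := by rw [hP, vmv_mul_vmv, hw, one_smul]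
  -- rank one forms
  have hSEP : S * E * P = vecMulVec ((S * E) *ᵥ w) w := by rw [hP]; exact mul_vmv _ _ _
  have hPEP : P * E * P = vecMulVec ((P * E) *ᵥ w) w := by
    nth_rewrite 2 [hP]
    exact mul_vmv _ _ _
  have hPES : P * E * S = (S * E * P)ᵀ := by
    rw [Matrix.transpose_mul, Matrix.transpose_mul, hSt, hEt, hPt, Matrix.mul_assoc]
  have hsSEP : hsNorm (S * E * P) = n2 ((S * E) *ᵥ w) := by
    rw [hSEP, hsNorm_vmv, hnw, mul_one]
  have opSEP : opNorm (S * E * P) = n2 ((S * E) *ᵥ w) := by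
    rw [hSEP, opNorm_vmv, hnw, mul_one]
  have hsPEP : hsNorm (P * E * P) = n2 ((P * E) *ᵥ w) := by
    rw [hPEP, hsNorm_vmv, hnw, mul_one]
  have opPEP : opNorm (P * E * P) = n2 ((P * E) *ᵥ w) := by
    rw [hPEP, opNorm_vmv, hnw, mul_one]
  have opPES : opNorm (P * E * S) = n2 ((S * E) *ᵥ w) := by
    rw [hPES, hSEP, vmv_transpose, opNorm_vmv, hnw, one_mul]
  -- projections
  set Q : Matrix (Fin d) (Fin d) ℝ := 1 - P with hQ
  have hQt : Qᵀ = Q := by rw [hQ, Matrix.transpose_sub, Matrix.transpose_one, hPt]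
  have hQQ : Q * Q = Q := by
    have h : (1 - P) * (1 - P) = 1 - P - (P - P * P) := by noncomm_ring
    rw [hQ, h, hPP]
    abel
  have hNQ : (S + c • P) * Q = S := by
    rw [hQ, Matrix.mul_sub, Matrix.mul_one, Matrix.add_mul, Matrix.smul_mul, hSP, hPP]
    simp
  have hQN : Q * (S + c • P) = S := by
    rw [hQ, Matrix.sub_mul, Matrix.one_mul, Matrix.mul_add, Matrix.mul_smul, hPS, hPP]
    simp
  have hNP : (S + c • P) * P = c • P := by
    rw [Matrix.add_mul, Matrix.smul_mul, hSP, hPP]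
    simp
  have hPN : P * (S + c • P) = c • P := by
    rw [Matrix.mul_add, Matrix.mul_smul, hPS, hPP]
    simp
  have hQMQ : Q * M * Q = S * E * S := by
    calc Q * M * Q = (Q * (S + c • P)) * E * ((S + c • P) * Q) := by
          rw [hM]; simp only [Matrix.mul_assoc]
      _ = S * E * S := by rw [hQN, hNQ]
  have hQMP : Q * M * P = c • (S * E * P) := by
    calc Q * M * P = (Q * (S + c • P)) * E * ((S + c • P) * P) := by
          rw [hM]; simp only [Matrix.mul_assoc]
      _ = c • (S * E * P) := by
          rw [hQN, hNP, Matrix.mul_smul, Matrix.mul_assoc]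
  have hPMP : P * M * P = (c * c) • (P * E * P) := by
    calc P * M * P = (P * (S + c • P)) * E * ((S + c • P) * P) := by
          rw [hM]; simp only [Matrix.mul_assoc]
      _ = (c * c) • (P * E * P) := by
          rw [hPN, hNP, Matrix.mul_smul, Matrix.smul_mul, Matrix.smul_mul, smul_smul,
            Matrix.mul_assoc]
  have hQn : opNorm Q ≤ 1 := opNorm_symm_idem_le_one Q hQt hQQ
  have hPn : opNorm P ≤ 1 := opNorm_symm_idem_le_one P hPt hPP
  have sandwich : ∀ A B : Matrix (Fin d) (Fin d) ℝ, opNorm A ≤ 1 → opNorm B ≤ 1 →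
      opNorm (A * M * B) ≤ opNorm M := by
    intro A B hA hB
    have h1 := opNorm_mul_le (A * M) B
    have h2 := opNorm_mul_le A M
    have := opNorm_nonneg (A * M)
    have := opNorm_nonneg M
    have := opNorm_nonneg A
    have := opNorm_nonneg B
    nlinarith
  have lower1 : opNorm (S * E * S) ≤ opNorm M := by
    rw [← hQMQ]; exact sandwich Q Q hQn hQn
  have lower2 : c * hsNorm (S * E * P) ≤ opNorm M := by
    have h := sandwich Q P hQn hPn
    rw [hQMP, opNorm_smul, abs_of_nonneg hc0, opSEP, ← hsSEP] at h
    exact h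
  have lower3 : (c * c) * hsNorm (P * E * P) ≤ opNorm M := by
    have h := sandwich P P hPn hPn
    rw [hPMP, opNorm_smul, abs_of_nonneg (mul_nonneg hc0 hc0), opPEP, ← hsPEP] at h
    exact h
  refine ⟨⟨lower1, lower2, lower3⟩, ?_⟩
  -- upper bound
  have hMdec : M = (S * E * S + (c * c) • (P * E * P)) + (c • (S * E * P) + c • (P * E * S)) := by
    rw [hM]
    simp only [Matrix.add_mul, Matrix.mul_add, Matrix.smul_mul, Matrix.mul_smul, smul_smul,
      smul_add, Matrix.mul_assoc]
    abel
  have hSESt : (S * E * S)ᵀ = S * E * S := by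
    rw [Matrix.transpose_mul, Matrix.transpose_mul, hSt, hEt, Matrix.mul_assoc]
  have hz1 : S * E * S * (P * E * P) = 0 := by
    calc S * E * S * (P * E * P) = (S * E) * ((S * P) * (E * P)) := by
          simp only [Matrix.mul_assoc]
      _ = 0 := by rw [hSP, Matrix.zero_mul, Matrix.mul_zero]
  have hz2 : S * E * S * P = 0 := by
    calc S * E * S * P = (S * E) * (S * P) := by simp only [Matrix.mul_assoc]
      _ = 0 := by rw [hSP, Matrix.mul_zero]
  have up1 : opNorm (S * E * S + (c * c) • (P * E * P)) ≤
      max (opNorm (S * E * S)) ((c * c) * hsNorm (P * E * P)) := by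
    have h := opNorm_orth_add_le (S * E * S) ((c * c) • (P * E * P)) P
      (by rw [hSESt, Matrix.mul_smul, hz1, smul_zero])
      hPt hPP hz2
      (by rw [Matrix.smul_mul, Matrix.mul_assoc (P * E) P P, hPP])
    rwa [opNorm_smul, abs_of_nonneg (mul_nonneg hc0 hc0), opPEP, ← hsPEP] at h
  have hz3 : P * E * S * (P * E * S) = 0 := by
    calc P * E * S * (P * E * S) = (P * E) * ((S * P) * (E * S)) := by
          simp only [Matrix.mul_assoc]
      _ = 0 := by rw [hSP, Matrix.zero_mul, Matrix.mul_zero]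
  have up2 : opNorm (c • (S * E * P) + c • (P * E * S)) ≤ c * hsNorm (S * E * P) := by
    have h := opNorm_orth_add_le (c • (S * E * P)) (c • (P * E * S)) Q
      (by rw [Matrix.transpose_smul, ← hPES, Matrix.smul_mul, Matrix.mul_smul, hz3,
            smul_zero, smul_zero])
      hQt hQQ
      (by rw [Matrix.smul_mul, hQ, Matrix.mul_sub, Matrix.mul_one,
            Matrix.mul_assoc (S * E) P P, hPP, sub_self, smul_zero])
      (by rw [Matrix.smul_mul, hQ, Matrix.mul_sub, Matrix.mul_one,
            Matrix.mul_assoc (P * E) S P, hSP, Matrix.mul_zero, sub_zero])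
    rw [opNorm_smul, opNorm_smul, abs_of_nonneg hc0, opSEP, opPES, max_self, ← hsSEP] at h
    exact h
  calc opNorm M ≤ opNorm (S * E * S + (c * c) • (P * E * P)) +
        opNorm (c • (S * E * P) + c • (P * E * S)) := by
        rw [hMdec] at *; exact opNorm_add_le _ _
    _ ≤ max (opNorm (S * E * S)) ((c * c) * hsNorm (P * E * P)) + c * hsNorm (S * E * P) :=
        add_le_add up1 up2

theorem stmt1 {d : ℕ} (lam : Fin d → ℝ) (u : Fin d → Fin d → ℝ)
    (hON : ∀ k l, u k ⬝ᵥ u l = if k = l then (1 : ℝ) else 0)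
    (hlam : Antitone lam)
    (E : Matrix (Fin d) (Fin d) ℝ) (hE : E.IsSymm)
    (j : Fin d) (gj : ℝ) (hgj_pos : 0 < gj)
    (hgj : IsLeast {x : ℝ | ∃ k, k ≠ j ∧ x = |lam k - lam j|} gj) :
    delta' lam u j gj E ≤ delta lam u j gj E ∧
      delta lam u j gj E ≤ 2 * delta' lam u j gj E := by
  have hEt : Eᵀ = E := hE
  set S := sqrtAbsRes lam u j with hSdef
  set P := proj (u j) with hPdef
  set c : ℝ := (Real.sqrt gj)⁻¹ with hcdef
  have hc0 : 0 ≤ c := inv_nonneg.mpr (Real.sqrt_nonneg _)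
  have hcc : c * c = gj⁻¹ := by
    rw [hcdef, ← mul_inv, Real.mul_self_sqrt hgj_pos.le]
  have hw : u j ⬝ᵥ u j = 1 := by simpa using hON j j
  have hSP : S * P = 0 := by
    rw [hSdef, sqrtAbsRes, Finset.sum_mul]
    refine Finset.sum_eq_zero fun k hk => ?_
    rw [Matrix.smul_mul, hPdef, proj, proj, vmv_mul_vmv, hON k j,
      if_neg (Finset.mem_filter.mp hk).2, zero_smul, smul_zero]
  have hPS : P * S = 0 := by
    rw [hSdef, sqrtAbsRes, Finset.mul_sum]
    refine Finset.sum_eq_zero fun k hk => ?_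
    rw [Matrix.mul_smul, hPdef, proj, proj, vmv_mul_vmv, hON j k,
      if_neg (Ne.symm (Finset.mem_filter.mp hk).2), zero_smul, smul_zero]
  have hSt : Sᵀ = S := by
    rw [hSdef, sqrtAbsRes, Matrix.transpose_sum]
    refine Finset.sum_congr rfl fun k _ => ?_
    rw [Matrix.transpose_smul, proj, vmv_transpose]
  have hk := key S P E (u j) (by rw [hPdef, proj]) hw hSt hSP hPS hEt c hc0
  obtain ⟨⟨l1, l2, l3⟩, hup⟩ := hk
  have hdelta : delta lam u j gj E = opNorm ((S + c • P) * E * (S + c • P)) := rfl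
  have hdelta' : delta' lam u j gj E =
      max (opNorm (S * E * S)) (max (c * hsNorm (S * E * P)) ((c * c) * hsNorm (P * E * P))) := by
    rw [delta', hcc]
  rw [hdelta, hdelta']
  constructor
  · exact max_le l1 (max_le l2 l3)
  · have h1 : max (opNorm (S * E * S)) ((c * c) * hsNorm (P * E * P)) ≤
        max (opNorm (S * E * S)) (max (c * hsNorm (S * E * P)) ((c * c) * hsNorm (P * E * P))) :=
      max_le (le_max_left _ _) (le_trans (le_max_right _ _) (le_max_right _ _))
    have h2 : c * hsNorm (S * E * P) ≤
        max (opNorm (S * E * S)) (max (c * hsNorm (S * E * P)) ((c * c) * hsNorm (P * E * P))) :=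
      le_trans (le_max_left _ _) (le_max_right _ _)
    linarith
end

section
/- Suppose δ_j = ‖(|R_j|^{1/2} + g_j^{-1/2} P_j) E (|R_j|^{1/2} + g_j^{-1/2} P_j)‖_∞ < 1/2. Then the j-th eigenvalue λ̂_j of Σ + E satisfies |λ̂_j − λ_j| ≤ δ_j g_j. -/
open Matrix Finset

section Aux

variable {d : ℕ}

lemma proj_mulVec (v x : Fin d → ℝ) : (proj v).mulVec x = (v ⬝ᵥ x) • v := by
  funext i
  simp only [proj, Matrix.mulVec, dotProduct, vecMulVec_apply, Pi.smul_apply, smul_eq_mul]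
  rw [Finset.sum_mul]
  exact Finset.sum_congr rfl fun j _ => by ring

lemma proj_transpose (v : Fin d → ℝ) : (proj v)ᵀ = proj v := by
  funext i j; simp [proj, vecMulVec_apply, mul_comm]

lemma sum_mulVec' (s : Finset (Fin d)) (M : Fin d → Matrix (Fin d) (Fin d) ℝ) (x : Fin d → ℝ) :
    (∑ k ∈ s, M k).mulVec x = ∑ k ∈ s, (M k).mulVec x := by
  funext i
  simp only [Matrix.mulVec, dotProduct, Matrix.sum_apply, Finset.sum_apply, Finset.sum_mul]
  exact Finset.sum_comm

lemma dotProduct_sum' (s : Finset (Fin d)) (x : Fin d → ℝ) (w : Fin d → Fin d → ℝ) :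
    x ⬝ᵥ (∑ k ∈ s, w k) = ∑ k ∈ s, x ⬝ᵥ w k := by
  simp only [dotProduct, Finset.sum_apply, Finset.mul_sum]
  exact Finset.sum_comm

lemma sum_smul_proj_mulVec (s : Finset (Fin d)) (μ : Fin d → ℝ) (v : Fin d → Fin d → ℝ)
    (x : Fin d → ℝ) :
    (∑ k ∈ s, μ k • proj (v k)).mulVec x = ∑ k ∈ s, (μ k * (v k ⬝ᵥ x)) • v k := by
  rw [sum_mulVec']
  exact Finset.sum_congr rfl fun k _ => by
    rw [Matrix.smul_mulVec, proj_mulVec, smul_smul]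

lemma dot_sum_smul_proj (s : Finset (Fin d)) (μ : Fin d → ℝ) (v : Fin d → Fin d → ℝ)
    (x : Fin d → ℝ) :
    x ⬝ᵥ (∑ k ∈ s, μ k • proj (v k)).mulVec x = ∑ k ∈ s, μ k * (v k ⬝ᵥ x)^2 := by
  rw [sum_smul_proj_mulVec, dotProduct_sum']
  exact Finset.sum_congr rfl fun k _ => by
    rw [dotProduct_smul, smul_eq_mul, dotProduct_comm]; ring

/-- opNorm quadratic bound -/
lemma abs_dot_mulVec_le (A : Matrix (Fin d) (Fin d) ℝ) (x : Fin d → ℝ) :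
    |x ⬝ᵥ A.mulVec x| ≤ opNorm A * (x ⬝ᵥ x) := by
  set y : EuclideanSpace ℝ (Fin d) := (WithLp.equiv 2 _).symm x with hy
  have h1 : x ⬝ᵥ A.mulVec x = inner ℝ y (Matrix.toEuclideanCLM (𝕜 := ℝ) A y) := by
    rw [hy, WithLp.equiv_symm_apply, Matrix.inner_toEuclideanCLM]
  have h2 : x ⬝ᵥ x = ‖y‖^2 := by
    rw [← real_inner_self_eq_norm_sq]
    rw [hy, WithLp.equiv_symm_apply, EuclideanSpace.inner_toLp_toLp]; rfl
  rw [h1, h2]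
  calc |inner ℝ y (Matrix.toEuclideanCLM (𝕜 := ℝ) A y)|
      ≤ ‖y‖ * ‖Matrix.toEuclideanCLM (𝕜 := ℝ) A y‖ := abs_real_inner_le_norm _ _
    _ ≤ ‖y‖ * (opNorm A * ‖y‖) := by
        gcongr; exact ContinuousLinearMap.le_opNorm _ _
    _ = opNorm A * ‖y‖^2 := by ring


section ON
variable {u : Fin d → Fin d → ℝ}
  (hON : ∀ k l, u k ⬝ᵥ u l = if k = l then (1:ℝ) else 0)

include hON

lemma ON.expansion (x : Fin d → ℝ) : ∑ k, (u k ⬝ᵥ x) • u k = x := by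
  have hU : (Matrix.of u) * (Matrix.of u)ᵀ = 1 := by
    ext k l
    simpa [Matrix.mul_apply, dotProduct, Matrix.one_apply] using hON k l
  have hU2 : (Matrix.of u)ᵀ * (Matrix.of u) = 1 := mul_eq_one_comm.mp hU
  have key : ∀ i l, ∑ k, u k i * u k l = if i = l then (1:ℝ) else 0 := by
    intro i l
    have := congrFun (congrFun hU2 i) l
    simpa [Matrix.mul_apply, Matrix.transpose_apply, Matrix.one_apply] using this
  funext i
  simp only [Finset.sum_apply, Pi.smul_apply, smul_eq_mul, dotProduct]
  calc ∑ k, (∑ l, u k l * x l) * u k i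
      = ∑ l, (∑ k, u k i * u k l) * x l := by
        simp_rw [Finset.sum_mul]
        rw [Finset.sum_comm]
        exact Finset.sum_congr rfl fun l _ => Finset.sum_congr rfl fun k _ => by ring
    _ = x i := by
        simp only [key, ite_mul, one_mul, zero_mul]
        simp

lemma ON.dot_coeff (c : Fin d → ℝ) (l : Fin d) :
    u l ⬝ᵥ (∑ k, c k • u k) = c l := by
  rw [dotProduct_sum']
  simp only [dotProduct_smul, hON, smul_eq_mul, mul_ite, mul_one, mul_zero]
  simp [eq_comm]

lemma ON.parseval (x : Fin d → ℝ) : x ⬝ᵥ x = ∑ k, (u k ⬝ᵥ x)^2 := by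
  have h := ON.expansion hON x
  calc x ⬝ᵥ x = x ⬝ᵥ (∑ k, (u k ⬝ᵥ x) • u k) := by rw [h]
    _ = ∑ k, (u k ⬝ᵥ x)^2 := by
        rw [dotProduct_sum']
        refine Finset.sum_congr rfl fun k _ => ?_
        rw [dotProduct_smul, smul_eq_mul, dotProduct_comm]
        ring

lemma ON.li : LinearIndependent ℝ u := by
  rw [Fintype.linearIndependent_iff]
  intro c hc l
  have h := ON.dot_coeff hON c l
  rw [hc] at h
  simpa using h.symm

lemma ON.dot_eq_zero_of_mem_span (s : Finset (Fin d)) {x : Fin d → ℝ}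
    (hx : x ∈ Submodule.span ℝ (Set.range (fun k : {k // k ∈ s} => u k)))
    {l : Fin d} (hl : l ∉ s) : u l ⬝ᵥ x = 0 := by
  induction hx using Submodule.span_induction with
  | mem y hy =>
      obtain ⟨⟨k, hk⟩, rfl⟩ := hy
      rw [hON]
      simp only [ite_eq_right_iff, one_ne_zero]
      rintro rfl; exact hl hk
  | zero => simp
  | add y z _ _ hy hz => rw [dotProduct_add, hy, hz, add_zero]
  | smul c y _ hy => rw [dotProduct_smul, hy, smul_zero]

lemma ON.finrank_span (s : Finset (Fin d)) :
    Module.finrank ℝ (Submodule.span ℝ (Set.range (fun k : {k // k ∈ s} => u k))) = s.card := by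
  have hli : LinearIndependent ℝ (fun k : {k // k ∈ s} => u k) :=
    (ON.li hON).comp Subtype.val Subtype.val_injective
  rw [finrank_span_eq_card hli]
  simp

end ON

lemma exists_ne_zero_mem_inf {u v : Fin d → Fin d → ℝ}
    (hONu : ∀ k l, u k ⬝ᵥ u l = if k = l then (1:ℝ) else 0)
    (hONv : ∀ k l, v k ⬝ᵥ v l = if k = l then (1:ℝ) else 0)
    (s t : Finset (Fin d)) (hcard : d < s.card + t.card) :
    ∃ x : Fin d → ℝ, x ≠ 0 ∧ (∀ l ∉ s, u l ⬝ᵥ x = 0) ∧ (∀ l ∉ t, v l ⬝ᵥ x = 0) := by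
  set V := Submodule.span ℝ (Set.range (fun k : {k // k ∈ s} => u k)) with hVdef
  set W := Submodule.span ℝ (Set.range (fun k : {k // k ∈ t} => v k)) with hWdef
  have hV : Module.finrank ℝ V = s.card := ON.finrank_span hONu s
  have hW : Module.finrank ℝ W = t.card := ON.finrank_span hONv t
  have hG := Submodule.finrank_sup_add_finrank_inf_eq V W
  have hle : Module.finrank ℝ ↥(V ⊔ W) ≤ d := by
    have h := Submodule.finrank_le (V ⊔ W)
    rwa [Module.finrank_fintype_fun_eq_card, Fintype.card_fin] at h
  have hpos : 0 < Module.finrank ℝ ↥(V ⊓ W) := by omega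
  have : Nontrivial ↥(V ⊓ W) := Module.nontrivial_of_finrank_pos hpos
  obtain ⟨⟨x, hxVW⟩, hx0⟩ := exists_ne (0 : ↥(V ⊓ W))
  refine ⟨x, ?_, fun l hl => ON.dot_eq_zero_of_mem_span hONu s hxVW.1 hl,
    fun l hl => ON.dot_eq_zero_of_mem_span hONv t hxVW.2 hl⟩
  simpa [Submodule.mk_eq_zero] using hx0


lemma E_quad_bound (lam : Fin d → ℝ) (u : Fin d → Fin d → ℝ)
    (hON : ∀ k l, u k ⬝ᵥ u l = if k = l then (1:ℝ) else 0)
    (j : Fin d) (gj : ℝ) (hgj_pos : 0 < gj)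
    (hg : ∀ k, k ≠ j → gj ≤ |lam k - lam j|)
    (E : Matrix (Fin d) (Fin d) ℝ) (y : Fin d → ℝ) :
    |y ⬝ᵥ E.mulVec y| ≤ delta lam u j gj E *
      ∑ k, (if k = j then gj else |lam k - lam j|) * (u k ⬝ᵥ y)^2 := by
  set w : Fin d → ℝ := fun k => if k = j then gj else |lam k - lam j| with hw
  have hwpos : ∀ k, 0 < w k := by
    intro k
    by_cases hk : k = j
    · simp [hw, hk, hgj_pos]
    · simp only [hw, hk, if_false]
      exact lt_of_lt_of_le hgj_pos (hg k hk)
  set f : Fin d → ℝ := fun k => Real.sqrt (w k) with hf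
  have hfpos : ∀ k, 0 < f k := fun k => Real.sqrt_pos.mpr (hwpos k)
  set c : Fin d → ℝ := fun k => u k ⬝ᵥ y with hc
  set z : Fin d → ℝ := ∑ k, (f k * c k) • u k with hz
  set T : Matrix (Fin d) (Fin d) ℝ :=
    sqrtAbsRes lam u j + (Real.sqrt gj)⁻¹ • proj (u j) with hT
  have hz_dot : ∀ l, u l ⬝ᵥ z = f l * c l := fun l => ON.dot_coeff hON _ l
  -- T z = y
  have hTz : T.mulVec z = y := by
    rw [hT, Matrix.add_mulVec, Matrix.smul_mulVec, proj_mulVec,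
      sqrtAbsRes, sum_smul_proj_mulVec]
    have h1 : ∀ k ∈ Finset.univ.filter (fun k => k ≠ j),
        ((Real.sqrt |lam k - lam j|)⁻¹ * (u k ⬝ᵥ z)) • u k = c k • u k := by
      intro k hk
      rw [Finset.mem_filter] at hk
      have hkj : k ≠ j := hk.2
      have hfk : f k = Real.sqrt |lam k - lam j| := by simp [hf, hw, hkj]
      rw [hz_dot, ← hfk, inv_mul_cancel_left₀ (ne_of_gt (hfpos k))]
    rw [Finset.sum_congr rfl h1]
    have h2 : (Real.sqrt gj)⁻¹ • ((u j ⬝ᵥ z) • u j) = c j • u j := by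
      rw [hz_dot, smul_smul]
      have hfj : f j = Real.sqrt gj := by simp [hf, hw]
      rw [hfj, inv_mul_cancel_left₀ (ne_of_gt (Real.sqrt_pos.mpr hgj_pos))]
    rw [h2]
    have h3 : Finset.univ.filter (fun k => k ≠ j) = Finset.univ \ {j} := by
      ext k; simp
    rw [h3, ← Finset.sum_eq_sum_sdiff_singleton_add (Finset.mem_univ j)
      (fun k => c k • u k)]
    exact ON.expansion hON y
  -- T symmetric
  have hT_symm : Tᵀ = T := by
    rw [hT, Matrix.transpose_add, Matrix.transpose_smul, proj_transpose,
      sqrtAbsRes, Matrix.transpose_sum]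
    congr 1
    exact Finset.sum_congr rfl fun k _ => by
      rw [Matrix.transpose_smul, proj_transpose]
  -- quadratic form identity
  have h_eq : y ⬝ᵥ E.mulVec y = z ⬝ᵥ (T * E * T).mulVec z := by
    conv_lhs => rw [← hTz]
    rw [← Matrix.mulVec_mulVec, ← Matrix.mulVec_mulVec,
      dotProduct_mulVec z, ← Matrix.mulVec_transpose, hT_symm,
      dotProduct_mulVec (T.mulVec z), Matrix.vecMul_mulVec]
  -- norm of z
  have hz_norm : z ⬝ᵥ z = ∑ k, w k * c k ^ 2 := by
    calc z ⬝ᵥ z = z ⬝ᵥ (∑ k, (f k * c k) • u k) := by rw [← hz]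
      _ = ∑ k, (f k * c k) * (f k * c k) := by
          rw [dotProduct_sum']
          refine Finset.sum_congr rfl fun k _ => ?_
          rw [dotProduct_smul, smul_eq_mul, dotProduct_comm, hz_dot]
      _ = ∑ k, w k * c k ^ 2 := by
          refine Finset.sum_congr rfl fun k _ => ?_
          have : f k * f k = w k := Real.mul_self_sqrt (le_of_lt (hwpos k))
          rw [← this]; ring
  rw [h_eq]
  calc |z ⬝ᵥ (T * E * T).mulVec z| ≤ opNorm (T * E * T) * (z ⬝ᵥ z) :=
        abs_dot_mulVec_le _ _
    _ = delta lam u j gj E * ∑ k, w k * c k ^ 2 := by rw [hz_norm]; rfl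


end Aux

theorem stmt2 {d : ℕ} (lam : Fin d → ℝ) (u : Fin d → Fin d → ℝ)
    (hON : ∀ k l, u k ⬝ᵥ u l = if k = l then (1 : ℝ) else 0)
    (hlam : Antitone lam)
    (E : Matrix (Fin d) (Fin d) ℝ) (hE : E.IsSymm)
    (j : Fin d) (gj : ℝ) (hgj_pos : 0 < gj)
    (hgj : IsLeast {x : ℝ | ∃ k, k ≠ j ∧ x = |lam k - lam j|} gj)
    (lamh : Fin d → ℝ) (uh : Fin d → Fin d → ℝ)
    (hONh : ∀ k l, uh k ⬝ᵥ uh l = if k = l then (1 : ℝ) else 0)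
    (hlamh : Antitone lamh)
    (hdecomp : (∑ k, lam k • proj (u k)) + E = ∑ k, lamh k • proj (uh k))
    (hdelta : delta lam u j gj E < 1 / 2) :
    |lamh j - lam j| ≤ delta lam u j gj E * gj := by
  set δ := delta lam u j gj E with hδdef
  have hδ0 : 0 ≤ δ := norm_nonneg _
  have hδ1 : δ ≤ 1 := le_of_lt (lt_of_lt_of_le hdelta (by norm_num))
  have hg : ∀ k, k ≠ j → gj ≤ |lam k - lam j| := fun k hk => hgj.2 ⟨k, hk, rfl⟩
  have hcard : d < (Finset.Iic j).card + (Finset.Ici j).card := by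
    rw [Fin.card_Iic, Fin.card_Ici]
    have := j.isLt
    omega
  have hq : ∀ x : Fin d → ℝ,
      ∑ k, lamh k * (uh k ⬝ᵥ x)^2 = (∑ k, lam k * (u k ⬝ᵥ x)^2) + x ⬝ᵥ E.mulVec x := by
    intro x
    have h := congrArg (fun M : Matrix (Fin d) (Fin d) ℝ => x ⬝ᵥ M.mulVec x) hdecomp
    simp only [Matrix.add_mulVec, dotProduct_add] at h
    rw [dot_sum_smul_proj, dot_sum_smul_proj] at h
    linarith [h]
  -- upper bound : lamh j ≤ lam j + δ * gj
  have upper : lamh j ≤ lam j + δ * gj := by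
    obtain ⟨x, hx0, hxh, hxu⟩ := exists_ne_zero_mem_inf hONh hON (Finset.Iic j)
      (Finset.Ici j) hcard
    have hn_pos : 0 < x ⬝ᵥ x := by
      obtain ⟨i, hi⟩ := Function.ne_iff.mp hx0
      exact Finset.sum_pos' (fun i _ => mul_self_nonneg (x i))
        ⟨i, Finset.mem_univ i, mul_self_pos.mpr hi⟩
    have hcj : (u j ⬝ᵥ x) ^ 2 ≤ x ⬝ᵥ x := by
      rw [ON.parseval hON x]
      exact Finset.single_le_sum (f := fun k => (u k ⬝ᵥ x)^2)
        (fun k _ => sq_nonneg _) (Finset.mem_univ j)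
    have h1 : lamh j * (x ⬝ᵥ x) ≤ ∑ k, lamh k * (uh k ⬝ᵥ x)^2 := by
      rw [ON.parseval hONh x, Finset.mul_sum]
      refine Finset.sum_le_sum fun k _ => ?_
      by_cases hk : k ≤ j
      · exact mul_le_mul_of_nonneg_right (hlamh hk) (sq_nonneg _)
      · have h0 : uh k ⬝ᵥ x = 0 := hxh k (by simpa using hk)
        simp [h0]
    have hEb : x ⬝ᵥ E.mulVec x
        ≤ δ * ∑ k, (if k = j then gj else |lam k - lam j|) * (u k ⬝ᵥ x) ^ 2 :=
      le_trans (le_abs_self _) (E_quad_bound lam u hON j gj hgj_pos hg E x)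
    have h2 : (∑ k, lam k * (u k ⬝ᵥ x) ^ 2)
          + δ * (∑ k, (if k = j then gj else |lam k - lam j|) * (u k ⬝ᵥ x) ^ 2)
        ≤ lam j * (x ⬝ᵥ x) + δ * gj * (u j ⬝ᵥ x) ^ 2 := by
      have hrhs : lam j * (x ⬝ᵥ x) + δ * gj * (u j ⬝ᵥ x) ^ 2
          = ∑ k, (lam j * (u k ⬝ᵥ x) ^ 2
              + if k = j then δ * gj * (u j ⬝ᵥ x) ^ 2 else 0) := by
        rw [Finset.sum_add_distrib, Finset.sum_ite_eq' Finset.univ j,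
          ON.parseval hON x, Finset.mul_sum]
        simp
      rw [hrhs, Finset.mul_sum, ← Finset.sum_add_distrib]
      refine Finset.sum_le_sum fun k _ => ?_
      by_cases hk : k = j
      · subst hk
        simp only [eq_self_iff_true, if_true]
        exact le_of_eq (by ring)
      · simp only [hk, if_false, add_zero]
        by_cases hjk : j ≤ k
        · have hlk : lam k ≤ lam j := hlam hjk
          have hwk : |lam k - lam j| = lam j - lam k := by
            rw [abs_of_nonpos (by linarith), neg_sub]
          rw [hwk]
          nlinarith [mul_nonneg (mul_nonneg (sub_nonneg.mpr hδ1)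
            (sub_nonneg.mpr hlk)) (sq_nonneg (u k ⬝ᵥ x))]
        · have h0 : u k ⬝ᵥ x = 0 := hxu k (by simpa using hjk)
          simp [h0]
    have h4 : δ * gj * (u j ⬝ᵥ x) ^ 2 ≤ δ * gj * (x ⬝ᵥ x) :=
      mul_le_mul_of_nonneg_left hcj (by positivity)
    have h3 : lamh j * (x ⬝ᵥ x) ≤ (lam j + δ * gj) * (x ⬝ᵥ x) := by
      have hx := hq x
      nlinarith [h1, hx, hEb, h2, h4]
    exact le_of_mul_le_mul_right h3 hn_pos
  -- lower bound : lam j - δ * gj ≤ lamh j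
  have lower : lam j - δ * gj ≤ lamh j := by
    obtain ⟨x, hx0, hxu, hxh⟩ := exists_ne_zero_mem_inf hON hONh (Finset.Iic j)
      (Finset.Ici j) hcard
    have hn_pos : 0 < x ⬝ᵥ x := by
      obtain ⟨i, hi⟩ := Function.ne_iff.mp hx0
      exact Finset.sum_pos' (fun i _ => mul_self_nonneg (x i))
        ⟨i, Finset.mem_univ i, mul_self_pos.mpr hi⟩
    have hcj : (u j ⬝ᵥ x) ^ 2 ≤ x ⬝ᵥ x := by
      rw [ON.parseval hON x]
      exact Finset.single_le_sum (f := fun k => (u k ⬝ᵥ x)^2)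
        (fun k _ => sq_nonneg _) (Finset.mem_univ j)
    have h1 : ∑ k, lamh k * (uh k ⬝ᵥ x)^2 ≤ lamh j * (x ⬝ᵥ x) := by
      rw [ON.parseval hONh x, Finset.mul_sum]
      refine Finset.sum_le_sum fun k _ => ?_
      by_cases hk : j ≤ k
      · exact mul_le_mul_of_nonneg_right (hlamh hk) (sq_nonneg _)
      · have h0 : uh k ⬝ᵥ x = 0 := hxh k (by simpa using hk)
        simp [h0]
    have hEb : -(δ * ∑ k, (if k = j then gj else |lam k - lam j|) * (u k ⬝ᵥ x) ^ 2)
        ≤ x ⬝ᵥ E.mulVec x := by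
      have h := E_quad_bound lam u hON j gj hgj_pos hg E x
      have h' := neg_abs_le (x ⬝ᵥ E.mulVec x)
      linarith
    have h2 : lam j * (x ⬝ᵥ x) - δ * gj * (u j ⬝ᵥ x) ^ 2
        ≤ (∑ k, lam k * (u k ⬝ᵥ x) ^ 2)
          - δ * (∑ k, (if k = j then gj else |lam k - lam j|) * (u k ⬝ᵥ x) ^ 2) := by
      have hlhs : lam j * (x ⬝ᵥ x) - δ * gj * (u j ⬝ᵥ x) ^ 2
          = ∑ k, (lam j * (u k ⬝ᵥ x) ^ 2
              - if k = j then δ * gj * (u j ⬝ᵥ x) ^ 2 else 0) := by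
        rw [Finset.sum_sub_distrib, Finset.sum_ite_eq' Finset.univ j,
          ON.parseval hON x, Finset.mul_sum]
        simp
      rw [hlhs, Finset.mul_sum, ← Finset.sum_sub_distrib]
      refine Finset.sum_le_sum fun k _ => ?_
      by_cases hk : k = j
      · subst hk
        simp only [eq_self_iff_true, if_true]
        exact le_of_eq (by ring)
      · simp only [hk, if_false, sub_zero]
        by_cases hjk : k ≤ j
        · have hlk : lam j ≤ lam k := hlam hjk
          have hwk : |lam k - lam j| = lam k - lam j := abs_of_nonneg (by linarith)
          rw [hwk]
          nlinarith [mul_nonneg (mul_nonneg (sub_nonneg.mpr hδ1)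
            (sub_nonneg.mpr hlk)) (sq_nonneg (u k ⬝ᵥ x))]
        · have h0 : u k ⬝ᵥ x = 0 := hxu k (by simpa using hjk)
          simp [h0]
    have h4 : δ * gj * (u j ⬝ᵥ x) ^ 2 ≤ δ * gj * (x ⬝ᵥ x) :=
      mul_le_mul_of_nonneg_left hcj (by positivity)
    have h3 : (lam j - δ * gj) * (x ⬝ᵥ x) ≤ lamh j * (x ⬝ᵥ x) := by
      have hx := hq x
      nlinarith [h1, hx, hEb, h2, h4]
    exact le_of_mul_le_mul_right h3 hn_pos
  rw [abs_sub_le_iff]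
  constructor <;> linarith
end

section
/- Suppose δ_j < 1/2. Then ‖|R_j|^{-1/2} P̂_j‖_2 ≤ ‖|R_j|^{1/2} E P_j‖_2 / (1 − 2δ_j), where |R_j|^{-1/2} = Σ_{k≠j} |λ_k − λ_j|^{1/2} P_k. -/
open Matrix Finset

namespace Stmt6Aux

lemma bilin_bound {d : ℕ} (A : Matrix (Fin d) (Fin d) ℝ) (v w : Fin d → ℝ) :
    |v ⬝ᵥ (A *ᵥ w)| ≤ ‖Matrix.toEuclideanCLM (𝕜 := ℝ) A‖ * Real.sqrt (v ⬝ᵥ v) * Real.sqrt (w ⬝ᵥ w) := by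
  set v' : EuclideanSpace ℝ (Fin d) := (WithLp.equiv 2 _).symm v
  set w' : EuclideanSpace ℝ (Fin d) := (WithLp.equiv 2 _).symm w
  have h1 : v ⬝ᵥ (A *ᵥ w) = inner ℝ v' (Matrix.toEuclideanCLM (𝕜 := ℝ) A w') := by
    rw [Matrix.inner_toEuclideanCLM]
    simp [PiLp.inner_apply, dotProduct, RCLike.inner_apply, v', w', mul_comm]
  have hv : ‖v'‖ = Real.sqrt (v ⬝ᵥ v) := by
    rw [EuclideanSpace.norm_eq]; congr 1; simp [dotProduct, v', sq]
  have hw : ‖w'‖ = Real.sqrt (w ⬝ᵥ w) := by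
    rw [EuclideanSpace.norm_eq]; congr 1; simp [dotProduct, w', sq]
  rw [h1, ← hv, ← hw]
  calc |inner ℝ v' (Matrix.toEuclideanCLM (𝕜 := ℝ) A w')|
      ≤ ‖v'‖ * ‖Matrix.toEuclideanCLM (𝕜 := ℝ) A w'‖ := abs_real_inner_le_norm _ _
    _ ≤ ‖v'‖ * (‖Matrix.toEuclideanCLM (𝕜 := ℝ) A‖ * ‖w'‖) := by
        gcongr; exact (Matrix.toEuclideanCLM (𝕜 := ℝ) A).le_opNorm w'
    _ = ‖Matrix.toEuclideanCLM (𝕜 := ℝ) A‖ * ‖v'‖ * ‖w'‖ := by ring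

lemma dotP_sum {d : ℕ} (v : Fin d → ℝ) {ι : Type*} (S : Finset ι) (f : ι → Fin d → ℝ) :
    v ⬝ᵥ (∑ k ∈ S, f k) = ∑ k ∈ S, v ⬝ᵥ f k := by
  simp only [dotProduct, Finset.sum_apply, Finset.mul_sum]
  exact Finset.sum_comm

lemma sum_dotP {d : ℕ} (v : Fin d → ℝ) {ι : Type*} (S : Finset ι) (f : ι → Fin d → ℝ) :
    (∑ k ∈ S, f k) ⬝ᵥ v = ∑ k ∈ S, f k ⬝ᵥ v := by
  simp only [dotProduct, Finset.sum_apply, Finset.sum_mul]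
  exact Finset.sum_comm

lemma proj_mulVec {d : ℕ} (w v : Fin d → ℝ) : proj w *ᵥ v = (w ⬝ᵥ v) • w := by
  ext i
  simp only [proj, vecMulVec, mulVec, dotProduct, Pi.smul_apply, smul_eq_mul, of_apply,
    Finset.sum_mul]
  exact Finset.sum_congr rfl fun q _ => by ring

lemma matsum_mulVec {d : ℕ} {ι : Type*} (S : Finset ι) (A : ι → Matrix (Fin d) (Fin d) ℝ)
    (v : Fin d → ℝ) : (∑ k ∈ S, A k) *ᵥ v = ∑ k ∈ S, A k *ᵥ v := by
  ext i
  simp only [mulVec, dotProduct, Matrix.sum_apply, Finset.sum_apply, Finset.sum_mul]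
  exact Finset.sum_comm

lemma mulVec_sum_smul {d : ℕ} {ι : Type*} (A : Matrix (Fin d) (Fin d) ℝ) (S : Finset ι)
    (f : ι → ℝ) (v : ι → Fin d → ℝ) :
    A *ᵥ (∑ k ∈ S, f k • v k) = ∑ k ∈ S, f k • (A *ᵥ v k) := by
  ext i
  simp only [mulVec, dotProduct, Finset.sum_apply, Pi.smul_apply, smul_eq_mul, Finset.mul_sum]
  rw [Finset.sum_comm]
  exact Finset.sum_congr rfl fun k _ => Finset.sum_congr rfl fun q _ => by ring

lemma mulVec_smul' {d : ℕ} (A : Matrix (Fin d) (Fin d) ℝ) (c : ℝ) (v : Fin d → ℝ) :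
    A *ᵥ (c • v) = c • (A *ᵥ v) := by
  ext i
  simp only [mulVec, dotProduct, Pi.smul_apply, smul_eq_mul, Finset.mul_sum]
  exact Finset.sum_congr rfl fun q _ => by ring

lemma symm_dot {d : ℕ} {M : Matrix (Fin d) (Fin d) ℝ} (hM : Mᵀ = M) (v w : Fin d → ℝ) :
    v ⬝ᵥ (M *ᵥ w) = (M *ᵥ v) ⬝ᵥ w := by
  rw [Matrix.dotProduct_mulVec, ← Matrix.mulVec_transpose, hM]

lemma quadform {d : ℕ} (c : Fin d → ℝ) (e : Fin d → Fin d → ℝ) (v : Fin d → ℝ) :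
    v ⬝ᵥ ((∑ k, c k • proj (e k)) *ᵥ v) = ∑ k, c k * (e k ⬝ᵥ v)^2 := by
  rw [matsum_mulVec, dotP_sum]
  refine Finset.sum_congr rfl fun k _ => ?_
  rw [smul_mulVec, proj_mulVec]
  rw [dotProduct_smul, dotProduct_smul]
  rw [dotProduct_comm v (e k)]
  simp [smul_eq_mul, sq]
  try ring

lemma dot_self_pos {d : ℕ} {v : Fin d → ℝ} (hv : v ≠ 0) : 0 < v ⬝ᵥ v := by
  rcases lt_or_eq_of_le (Finset.sum_nonneg fun i _ => mul_self_nonneg (v i) : 0 ≤ v ⬝ᵥ v) with h | h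
  · exact h
  · exact absurd (dotProduct_self_eq_zero.mp h.symm) hv

lemma exists_mem_inf {d : ℕ} (V W : Submodule ℝ (Fin d → ℝ))
    (h : d < Module.finrank ℝ V + Module.finrank ℝ W) :
    ∃ v, v ∈ V ∧ v ∈ W ∧ v ≠ 0 := by
  have hs := Submodule.finrank_sup_add_finrank_inf_eq V W
  have h1 : Module.finrank ℝ ↥(V ⊔ W) ≤ d := by
    have := Submodule.finrank_le (V ⊔ W)
    rwa [Module.finrank_fin_fun] at this
  have h2 : 0 < Module.finrank ℝ ↥(V ⊓ W) := by omega
  rw [Module.finrank_pos_iff] at h2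
  obtain ⟨⟨v, hv⟩, h0⟩ := exists_ne (0 : ↥(V ⊓ W))
  exact ⟨v, hv.1, hv.2, fun hh => h0 (Subtype.ext hh)⟩

lemma sum_proj_eq_one {d : ℕ} {e : Fin d → Fin d → ℝ}
    (hON : ∀ k l, e k ⬝ᵥ e l = if k = l then (1 : ℝ) else 0) :
    (∑ k, proj (e k)) = (1 : Matrix (Fin d) (Fin d) ℝ) := by
  have hU : (Matrix.of e) * (Matrix.of e)ᵀ = 1 := by
    ext k l
    simpa [Matrix.mul_apply, dotProduct, Matrix.one_apply] using hON k l
  have hU' := mul_eq_one_comm.mp hU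
  ext i p
  have h2 := congrFun (congrFun hU' i) p
  simp only [Matrix.mul_apply, Matrix.transpose_apply, Matrix.of_apply] at h2
  simp only [proj, vecMulVec, Matrix.sum_apply, Matrix.of_apply]
  exact h2

lemma trace_conj {d : ℕ} (B : Matrix (Fin d) (Fin d) ℝ) :
    Matrix.trace (Bᵀ * B) = ∑ p, ∑ i, (B i p) ^ 2 := by
  simp [Matrix.trace, Matrix.mul_apply, Matrix.diag, sq]

lemma hsNorm_mul_proj {d : ℕ} (A : Matrix (Fin d) (Fin d) ℝ) (w : Fin d → ℝ)
    (hw : w ⬝ᵥ w = 1) :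
    hsNorm (A * proj w) = Real.sqrt ((A *ᵥ w) ⬝ᵥ (A *ᵥ w)) := by
  unfold hsNorm
  congr 1
  rw [trace_conj]
  have hentry : ∀ i p, (A * proj w) i p = (A *ᵥ w) i * w p := by
    intro i p
    simp only [Matrix.mul_apply, proj, vecMulVec, mulVec, dotProduct, of_apply,
      Finset.sum_mul]
    exact Finset.sum_congr rfl fun q _ => by ring
  calc ∑ p, ∑ i, ((A * proj w) i p)^2 = ∑ p, ∑ i, ((A *ᵥ w) i)^2 * (w p)^2 := by
        refine Finset.sum_congr rfl fun p _ => Finset.sum_congr rfl fun i _ => ?_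
        rw [hentry]; ring
    _ = (∑ i, ((A *ᵥ w) i)^2) * ∑ p, (w p)^2 := by
        rw [Finset.sum_mul_sum]
        exact Finset.sum_comm
    _ = (A *ᵥ w) ⬝ᵥ (A *ᵥ w) := by
        have h1 : ∑ p, (w p)^2 = 1 := by simpa [dotProduct, sq] using hw
        rw [h1, mul_one]
        simp [dotProduct, sq]

section ONlemmas
variable {d : ℕ} {e : Fin d → Fin d → ℝ}
  (hON : ∀ k l, e k ⬝ᵥ e l = if k = l then (1 : ℝ) else 0)

include hON

lemma dot_sum_smul (c : Fin d → ℝ) (S : Finset (Fin d)) (l : Fin d) (hl : l ∈ S) :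
    e l ⬝ᵥ (∑ k ∈ S, c k • e k) = c l := by
  rw [dotP_sum]
  rw [Finset.sum_eq_single l]
  · rw [dotProduct_smul, hON l l]; simp
  · intro k hk hkl
    rw [dotProduct_smul, hON l k]
    simp [Ne.symm hkl]
  · intro h; exact absurd hl h

lemma linIndep_on (S : Finset (Fin d)) :
    LinearIndependent ℝ (fun k : {k // k ∈ S} => e k) := by
  rw [Fintype.linearIndependent_iff]
  intro c hc l
  have h2 := congrArg (fun v => e (l : Fin d) ⬝ᵥ v) hc
  simp only [dotProduct_zero] at h2
  rw [dotP_sum] at h2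
  rw [Finset.sum_eq_single l] at h2
  · rw [dotProduct_smul, hON] at h2; simpa using h2
  · intro k _ hkl
    rw [dotProduct_smul, hON]
    have : (l : Fin d) ≠ (k : Fin d) := fun h => hkl (Subtype.ext h.symm)
    simp [this]
  · simp

lemma finrank_span_on (S : Finset (Fin d)) :
    Module.finrank ℝ (Submodule.span ℝ (e '' S)) = S.card := by
  rw [show (e '' (S : Set (Fin d))) = Set.range (fun k : {k // k ∈ S} => e k) from
    Set.image_eq_range _ _]
  rw [finrank_span_eq_card (R := ℝ) (linIndep_on hON S), Fintype.card_coe]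

lemma expand_span {S : Finset (Fin d)} {v : Fin d → ℝ}
    (hv : v ∈ Submodule.span ℝ (e '' S)) :
    v = ∑ k ∈ S, (e k ⬝ᵥ v) • e k := by
  induction hv using Submodule.span_induction with
  | mem x hx =>
      obtain ⟨k, hk, rfl⟩ := hx
      have hk' : k ∈ S := by simpa using hk
      rw [Finset.sum_congr rfl (fun l _ => by rw [hON l k, ite_smul, one_smul, zero_smul])]
      rw [Finset.sum_ite_eq' S k e]
      simp [hk']
  | zero => simp
  | add x y hx hy ihx ihy =>
      rw [Finset.sum_congr rfl (fun l _ => by rw [dotProduct_add, add_smul])]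
      rw [Finset.sum_add_distrib, ← ihx, ← ihy]
  | smul a x hx ih =>
      rw [Finset.sum_congr rfl (fun l _ => by rw [dotProduct_smul, smul_assoc])]
      rw [← Finset.smul_sum, ← ih]

lemma parseval_span {S : Finset (Fin d)} {v : Fin d → ℝ}
    (hv : v ∈ Submodule.span ℝ (e '' S)) :
    v ⬝ᵥ v = ∑ k ∈ S, (e k ⬝ᵥ v) ^ 2 := by
  conv_lhs => rw [expand_span hON hv]
  rw [sum_dotP]
  refine Finset.sum_congr rfl fun k hk => ?_
  rw [smul_dotProduct, smul_eq_mul, sq, dot_sum_smul hON _ _ _ hk]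

lemma vanish_span {S : Finset (Fin d)} {v : Fin d → ℝ}
    (hv : v ∈ Submodule.span ℝ (e '' S)) {l : Fin d} (hl : l ∉ S) :
    e l ⬝ᵥ v = 0 := by
  conv_lhs => rw [expand_span hON hv]
  rw [dotP_sum]
  refine Finset.sum_eq_zero fun k hk => ?_
  rw [dotProduct_smul, hON l k]
  have : l ≠ k := fun h => hl (h ▸ hk)
  simp [this]

lemma sum_restrict {S : Finset (Fin d)} {v : Fin d → ℝ}
    (hv : v ∈ Submodule.span ℝ (e '' S)) (cf : Fin d → ℝ) :
    ∑ k, cf k * (e k ⬝ᵥ v)^2 = ∑ k ∈ S, cf k * (e k ⬝ᵥ v)^2 := by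
  refine (Finset.sum_subset (Finset.subset_univ S) fun k _ hk => ?_).symm
  rw [vanish_span hON hv hk]
  simp

end ONlemmas

end Stmt6Aux

set_option maxHeartbeats 3200000 in
theorem stmt6 {d : ℕ} (lam : Fin d → ℝ) (u : Fin d → Fin d → ℝ)
    (hON : ∀ k l, u k ⬝ᵥ u l = if k = l then (1 : ℝ) else 0)
    (hlam : Antitone lam)
    (E : Matrix (Fin d) (Fin d) ℝ) (hE : E.IsSymm)
    (j : Fin d) (gj : ℝ) (hgj_pos : 0 < gj)
    (hgj : IsLeast {x : ℝ | ∃ k, k ≠ j ∧ x = |lam k - lam j|} gj)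
    (lamh : Fin d → ℝ) (uh : Fin d → Fin d → ℝ)
    (hONh : ∀ k l, uh k ⬝ᵥ uh l = if k = l then (1 : ℝ) else 0)
    (hlamh : Antitone lamh)
    (hdecomp : (∑ k, lam k • proj (u k)) + E = ∑ k, lamh k • proj (uh k))
    (hdelta : delta lam u j gj E < 1 / 2) :
    hsNorm (invSqrtAbsRes lam u j * proj (uh j)) ≤
      hsNorm (sqrtAbsRes lam u j * E * proj (u j)) / (1 - 2 * delta lam u j gj E) := by
  classical
  open Stmt6Aux in
  have hg1 : ∀ k, k ≠ j → gj ≤ |lam k - lam j| := fun k hk => hgj.2 ⟨k, hk, rfl⟩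
  set δ := delta lam u j gj E with hδdef
  set T : Matrix (Fin d) (Fin d) ℝ := sqrtAbsRes lam u j + (Real.sqrt gj)⁻¹ • proj (u j)
    with hTdef
  set F : Matrix (Fin d) (Fin d) ℝ := T * E * T with hFdef
  have hδF : δ = ‖Matrix.toEuclideanCLM (𝕜 := ℝ) F‖ := by
    rw [hδdef, hFdef, hTdef]; rfl
  have hδ0 : 0 ≤ δ := by rw [hδF]; exact norm_nonneg _
  have hδ2 : δ < 1/2 := hdelta
  have hFb : ∀ v w : Fin d → ℝ,
      |v ⬝ᵥ (F *ᵥ w)| ≤ δ * Real.sqrt (v ⬝ᵥ v) * Real.sqrt (w ⬝ᵥ w) := by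
    intro v w; rw [hδF]; exact Stmt6Aux.bilin_bound F v w
  set sk : Fin d → ℝ := fun k => Real.sqrt |lam k - lam j| with hskdef
  set τ : Fin d → ℝ := fun k => if k = j then (Real.sqrt gj)⁻¹ else (sk k)⁻¹ with hτdef
  have hsg : 0 < Real.sqrt gj := Real.sqrt_pos.mpr hgj_pos
  have hapos : ∀ k, k ≠ j → 0 < |lam k - lam j| := fun k hk =>
    lt_of_lt_of_le hgj_pos (hg1 k hk)
  have hskpos : ∀ k, k ≠ j → 0 < sk k := fun k hk => by
    rw [hskdef]; exact Real.sqrt_pos.mpr (hapos k hk)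
  have hsksq : ∀ k, sk k * sk k = |lam k - lam j| := fun k => by
    rw [hskdef]; exact Real.mul_self_sqrt (abs_nonneg _)
  have hτpos : ∀ k, 0 < τ k := by
    intro k
    by_cases hk : k = j
    · simp only [hτdef, hk, if_pos rfl]; exact inv_pos.mpr hsg
    · simp only [hτdef, if_neg hk]; exact inv_pos.mpr (hskpos k hk)
  have hτinvne : ∀ k, (τ k)⁻¹ ≠ 0 := fun k => inv_ne_zero (ne_of_gt (hτpos k))
  have hτinvj : (τ j)⁻¹ = Real.sqrt gj := by simp [hτdef]
  have hτinvk : ∀ k, k ≠ j → (τ k)⁻¹ = sk k := fun k hk => by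
    simp [hτdef, hk]
  have hτinv2 : ∀ k, ((τ k)⁻¹)^2 = if k = j then gj else |lam k - lam j| := by
    intro k
    by_cases hk : k = j
    · rw [hk, hτinvj, if_pos rfl, Real.sq_sqrt hgj_pos.le]
    · rw [hτinvk k hk, if_neg hk, sq, hsksq]
  -- T acts diagonally on the u basis
  have hSmulVec : ∀ k, sqrtAbsRes lam u j *ᵥ u k =
      if k ∈ Finset.univ.filter (fun l => l ≠ j) then (sk k)⁻¹ • u k else 0 := by
    intro k
    unfold sqrtAbsRes
    rw [Stmt6Aux.matsum_mulVec]
    rw [Finset.sum_congr rfl (fun l _ =>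
      show ((Real.sqrt |lam l - lam j|)⁻¹ • proj (u l)) *ᵥ u k
          = if l = k then (sk l)⁻¹ • u l else 0 by
        rw [smul_mulVec, Stmt6Aux.proj_mulVec, hON l k]
        rw [hskdef]
        split_ifs with h
        · simp
        · simp)]
    rw [Finset.sum_ite_eq' _ k _]
  have hTmul : ∀ k, T *ᵥ u k = τ k • u k := by
    intro k
    rw [hTdef, Matrix.add_mulVec, smul_mulVec, Stmt6Aux.proj_mulVec, hON j k,
      hSmulVec, hτdef]
    by_cases hk : k = j
    · subst hk; simp
    · simp [hk, Ne.symm hk]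
  have hprojsym : ∀ w : Fin d → ℝ, (proj w)ᵀ = proj w := by
    intro w; ext i p; simp [proj, vecMulVec, mul_comm]
  have hTsym : Tᵀ = T := by
    rw [hTdef]
    unfold sqrtAbsRes
    rw [Matrix.transpose_add, Matrix.transpose_smul, hprojsym, Matrix.transpose_sum]
    congr 1
    exact Finset.sum_congr rfl fun l _ => by rw [Matrix.transpose_smul, hprojsym]
  have hconj : ∀ a b : Fin d → ℝ, a ⬝ᵥ (F *ᵥ b) = (T *ᵥ a) ⬝ᵥ (E *ᵥ (T *ᵥ b)) := by
    intro a b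
    rw [hFdef, ← Matrix.mulVec_mulVec, ← Matrix.mulVec_mulVec, Stmt6Aux.symm_dot hTsym]
  have hMkl : ∀ k l, u k ⬝ᵥ (F *ᵥ u l) = τ k * τ l * (u k ⬝ᵥ (E *ᵥ u l)) := by
    intro k l
    rw [hconj, hTmul, hTmul, Stmt6Aux.mulVec_smul', smul_dotProduct, dotProduct_smul]
    simp only [smul_eq_mul]; ring
  -- eigen-equation components
  set x : Fin d → ℝ := fun k => u k ⬝ᵥ uh j with hxdef
  have hAh : (∑ k, lamh k • proj (uh k)) *ᵥ uh j = lamh j • uh j := by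
    rw [Stmt6Aux.matsum_mulVec]
    rw [Finset.sum_congr rfl (fun l _ =>
      show (lamh l • proj (uh l)) *ᵥ uh j = if l = j then lamh l • uh l else 0 by
        rw [smul_mulVec, Stmt6Aux.proj_mulVec, hONh l j]
        split_ifs with h <;> simp)]
    rw [Finset.sum_ite_eq' _ j _]
    simp
  have hSigv : ∀ v : Fin d → ℝ,
      (∑ k, lam k • proj (u k)) *ᵥ v = ∑ l, (lam l * (u l ⬝ᵥ v)) • u l := by
    intro v
    rw [Stmt6Aux.matsum_mulVec]
    exact Finset.sum_congr rfl fun l _ => by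
      rw [smul_mulVec, Stmt6Aux.proj_mulVec, smul_smul]
  have hEuh : E *ᵥ uh j = lamh j • uh j - ∑ l, (lam l * x l) • u l := by
    have hE' : E = (∑ k, lamh k • proj (uh k)) - ∑ k, lam k • proj (u k) :=
      eq_sub_of_add_eq' hdecomp
    rw [hE', Matrix.sub_mulVec, hAh, hSigv]
  have hE1 : ∀ k, u k ⬝ᵥ (E *ᵥ uh j) = (lamh j - lam k) * x k := by
    intro k
    rw [hEuh, dotProduct_sub, dotProduct_smul,
      Stmt6Aux.dot_sum_smul hON (fun l => lam l * x l) Finset.univ k (Finset.mem_univ k)]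
    simp only [smul_eq_mul, hxdef]
    ring
  have hexp : uh j = ∑ l, x l • u l := by
    have h1 : (1 : Matrix (Fin d) (Fin d) ℝ) *ᵥ uh j = uh j := by simp
    rw [← Stmt6Aux.sum_proj_eq_one hON, Stmt6Aux.matsum_mulVec] at h1
    rw [← h1]
    exact Finset.sum_congr rfl fun l _ => Stmt6Aux.proj_mulVec _ _
  have hzz : ∀ (S : Finset (Fin d)) (cf : Fin d → ℝ),
      (∑ k ∈ S, cf k • u k) ⬝ᵥ (∑ k ∈ S, cf k • u k) = ∑ k ∈ S, (cf k)^2 := by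
    intro S cf
    rw [Stmt6Aux.sum_dotP]
    refine Finset.sum_congr rfl fun l hl => ?_
    rw [smul_dotProduct, Stmt6Aux.dot_sum_smul hON cf S l hl, smul_eq_mul, sq]
  have hx1 : ∑ l, x l ^ 2 = 1 := by
    have huu : uh j ⬝ᵥ uh j = 1 := by simpa using hONh j j
    nth_rewrite 1 [hexp] at huu
    nth_rewrite 1 [hexp] at huu
    rw [hzz] at huu
    exact huu
  have hxj1 : |x j| ≤ 1 := by
    have h1 : x j ^ 2 ≤ 1 := by
      rw [← hx1]
      exact Finset.single_le_sum (f := fun l => x l ^ 2) (fun l _ => sq_nonneg _)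
        (Finset.mem_univ j)
    nlinarith [abs_nonneg (x j), sq_abs (x j)]
  -- bound on quadratic form of E on coordinate spans
  have hEbound : ∀ (S : Finset (Fin d)) (v : Fin d → ℝ), v ∈ Submodule.span ℝ (u '' S) →
      |v ⬝ᵥ (E *ᵥ v)| ≤ δ * ∑ k ∈ S, ((τ k)⁻¹)^2 * (u k ⬝ᵥ v)^2 := by
    intro S v hv
    set z := ∑ k ∈ S, ((τ k)⁻¹ * (u k ⬝ᵥ v)) • u k with hzdef
    have hTz : T *ᵥ z = v := by
      rw [hzdef, Stmt6Aux.mulVec_sum_smul]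
      conv_rhs => rw [Stmt6Aux.expand_span hON hv]
      refine Finset.sum_congr rfl fun k hk => ?_
      rw [hTmul, smul_smul]
      congr 1
      rw [mul_comm ((τ k)⁻¹) _, mul_assoc, inv_mul_cancel₀ (ne_of_gt (hτpos k)), mul_one]
    have h1 : z ⬝ᵥ (F *ᵥ z) = v ⬝ᵥ (E *ᵥ v) := by rw [hconj, hTz]
    have h2 := hFb z z
    rw [h1] at h2
    have hzznn : (0:ℝ) ≤ z ⬝ᵥ z := Finset.sum_nonneg fun i _ => mul_self_nonneg _
    have hz2 : z ⬝ᵥ z = ∑ k ∈ S, ((τ k)⁻¹)^2 * (u k ⬝ᵥ v)^2 := by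
      rw [hzdef, hzz]
      exact Finset.sum_congr rfl fun k _ => by ring
    calc |v ⬝ᵥ (E *ᵥ v)| ≤ δ * Real.sqrt (z ⬝ᵥ z) * Real.sqrt (z ⬝ᵥ z) := h2
      _ = δ * (z ⬝ᵥ z) := by rw [mul_assoc, Real.mul_self_sqrt hzznn]
      _ = δ * ∑ k ∈ S, ((τ k)⁻¹)^2 * (u k ⬝ᵥ v)^2 := by rw [hz2]
  -- quadratic forms
  have hsplit : ∀ v : Fin d → ℝ, v ⬝ᵥ ((∑ k, lamh k • proj (uh k)) *ᵥ v)
      = v ⬝ᵥ ((∑ k, lam k • proj (u k)) *ᵥ v) + v ⬝ᵥ (E *ᵥ v) := by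
    intro v
    rw [← hdecomp, Matrix.add_mulVec, dotProduct_add]
  -- Weyl bound
  have hWeyl : |lamh j - lam j| ≤ δ * gj := by
    have hjlt : (j:ℕ) < d := j.isLt
    have hlow : lam j - δ * gj ≤ lamh j := by
      obtain ⟨v, hv1, hv2, hv0⟩ := Stmt6Aux.exists_mem_inf
        (Submodule.span ℝ (u '' (Finset.Iic j)))
        (Submodule.span ℝ (uh '' (Finset.Ici j)))
        (by rw [Stmt6Aux.finrank_span_on hON, Stmt6Aux.finrank_span_on hONh,
              Fin.card_Iic, Fin.card_Ici]; omega)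
      have hvv : 0 < v ⬝ᵥ v := Stmt6Aux.dot_self_pos hv0
      have hub : v ⬝ᵥ ((∑ k, lamh k • proj (uh k)) *ᵥ v) ≤ lamh j * (v ⬝ᵥ v) := by
        rw [Stmt6Aux.quadform, Stmt6Aux.sum_restrict hONh hv2,
          Stmt6Aux.parseval_span hONh hv2, Finset.mul_sum]
        refine Finset.sum_le_sum fun k hk => ?_
        have hlk : lamh k ≤ lamh j := hlamh (Finset.mem_Ici.mp hk)
        nlinarith [sq_nonneg (uh k ⬝ᵥ v)]
      have hlb : (lam j - δ * gj) * (v ⬝ᵥ v) ≤ v ⬝ᵥ ((∑ k, lamh k • proj (uh k)) *ᵥ v) := by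
        rw [hsplit, Stmt6Aux.quadform, Stmt6Aux.sum_restrict hON hv1,
          Stmt6Aux.parseval_span hON hv1, Finset.mul_sum]
        have hEb := hEbound (Finset.Iic j) v hv1
        have h5 := (abs_le.mp hEb).1
        have key : ∀ k ∈ Finset.Iic j,
            (lam j - δ * gj) * (u k ⬝ᵥ v)^2 + δ * (((τ k)⁻¹)^2 * (u k ⬝ᵥ v)^2)
            ≤ lam k * (u k ⬝ᵥ v)^2 := by
          intro k hk
          have hkj : k ≤ j := Finset.mem_Iic.mp hk
          rw [hτinv2 k]
          by_cases hkj' : k = j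
          · rw [if_pos hkj', hkj']
            have h9 : (lam j - δ*gj) * (u j ⬝ᵥ v)^2 + δ*(gj * (u j ⬝ᵥ v)^2)
                = lam j * (u j ⬝ᵥ v)^2 := by ring
            linarith
          · rw [if_neg hkj']
            have ha : |lam k - lam j| = lam k - lam j :=
              abs_of_nonneg (by linarith [hlam hkj])
            rw [ha]
            have hg := hg1 k hkj'
            rw [ha] at hg
            nlinarith [mul_nonneg (mul_nonneg
                (by linarith : (0:ℝ) ≤ 1-δ)
                (by linarith [hlam hkj] : (0:ℝ) ≤ lam k - lam j)) (sq_nonneg (u k ⬝ᵥ v)),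
              mul_nonneg (mul_nonneg hδ0 hgj_pos.le) (sq_nonneg (u k ⬝ᵥ v))]
        have hsum := Finset.sum_le_sum key
        rw [Finset.sum_add_distrib] at hsum
        have hms : δ * ∑ k ∈ Finset.Iic j, ((τ k)⁻¹)^2 * (u k ⬝ᵥ v)^2
            = ∑ k ∈ Finset.Iic j, δ * (((τ k)⁻¹)^2 * (u k ⬝ᵥ v)^2) :=
          Finset.mul_sum _ _ _
        linarith [hsum, h5, hms]
      nlinarith [hub, hlb, hvv]
    have hup : lamh j ≤ lam j + δ * gj := by
      obtain ⟨v, hv1, hv2, hv0⟩ := Stmt6Aux.exists_mem_inf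
        (Submodule.span ℝ (u '' (Finset.Ici j)))
        (Submodule.span ℝ (uh '' (Finset.Iic j)))
        (by rw [Stmt6Aux.finrank_span_on hON, Stmt6Aux.finrank_span_on hONh,
              Fin.card_Ici, Fin.card_Iic]; omega)
      have hvv : 0 < v ⬝ᵥ v := Stmt6Aux.dot_self_pos hv0
      have hub : lamh j * (v ⬝ᵥ v) ≤ v ⬝ᵥ ((∑ k, lamh k • proj (uh k)) *ᵥ v) := by
        rw [Stmt6Aux.quadform, Stmt6Aux.sum_restrict hONh hv2,
          Stmt6Aux.parseval_span hONh hv2, Finset.mul_sum]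
        refine Finset.sum_le_sum fun k hk => ?_
        have hlk : lamh j ≤ lamh k := hlamh (Finset.mem_Iic.mp hk)
        nlinarith [sq_nonneg (uh k ⬝ᵥ v)]
      have hlb : v ⬝ᵥ ((∑ k, lamh k • proj (uh k)) *ᵥ v) ≤ (lam j + δ * gj) * (v ⬝ᵥ v) := by
        rw [hsplit, Stmt6Aux.quadform, Stmt6Aux.sum_restrict hON hv1,
          Stmt6Aux.parseval_span hON hv1, Finset.mul_sum]
        have hEb := hEbound (Finset.Ici j) v hv1
        have h5 := (abs_le.mp hEb).2
        have key : ∀ k ∈ Finset.Ici j,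
            lam k * (u k ⬝ᵥ v)^2 + δ * (((τ k)⁻¹)^2 * (u k ⬝ᵥ v)^2)
            ≤ (lam j + δ * gj) * (u k ⬝ᵥ v)^2 := by
          intro k hk
          have hkj : j ≤ k := Finset.mem_Ici.mp hk
          rw [hτinv2 k]
          by_cases hkj' : k = j
          · rw [if_pos hkj', hkj']
            have h9 : lam j * (u j ⬝ᵥ v)^2 + δ*(gj * (u j ⬝ᵥ v)^2)
                = (lam j + δ*gj) * (u j ⬝ᵥ v)^2 := by ring
            linarith
          · rw [if_neg hkj']
            have ha : |lam k - lam j| = lam j - lam k := by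
              rw [abs_of_nonpos (by linarith [hlam hkj])]; ring
            rw [ha]
            have hg := hg1 k hkj'
            rw [ha] at hg
            nlinarith [mul_nonneg (mul_nonneg
                (by linarith : (0:ℝ) ≤ 1-δ)
                (by linarith [hlam hkj] : (0:ℝ) ≤ lam j - lam k)) (sq_nonneg (u k ⬝ᵥ v)),
              mul_nonneg (mul_nonneg hδ0 hgj_pos.le) (sq_nonneg (u k ⬝ᵥ v))]
        have hsum := Finset.sum_le_sum key
        rw [Finset.sum_add_distrib] at hsum
        have hms : δ * ∑ k ∈ Finset.Ici j, ((τ k)⁻¹)^2 * (u k ⬝ᵥ v)^2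
            = ∑ k ∈ Finset.Ici j, δ * (((τ k)⁻¹)^2 * (u k ⬝ᵥ v)^2) :=
          Finset.mul_sum _ _ _
        linarith [hsum, h5, hms]
      nlinarith [hub, hlb, hvv]
    rw [abs_le]
    constructor <;> linarith
  have hgap : ∀ k, k ≠ j → (1 - δ) * |lam k - lam j| ≤ |lamh j - lam k| := by
    intro k hk
    have h1 := hg1 k hk
    have h2 : |lam k - lam j| ≤ |lam k - lamh j| + |lamh j - lam j| := abs_sub_le _ _ _
    rw [abs_sub_comm (lam k) (lamh j)] at h2
    have h3 : δ * gj ≤ δ * |lam k - lam j| := mul_le_mul_of_nonneg_left h1 hδ0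
    nlinarith [abs_nonneg (lamh j - lam k)]
  have hδ1 : (0:ℝ) < 1 - δ := by linarith
  have hgap0 : ∀ k, k ≠ j → 0 < |lamh j - lam k| := fun k hk =>
    lt_of_lt_of_le (by nlinarith [hapos k hk] : (0:ℝ) < (1 - δ) * |lam k - lam j|) (hgap k hk)
  -- main fixed point argument
  set Sc : Finset (Fin d) := Finset.univ.filter (fun k => k ≠ j) with hScdef
  set y : Fin d → ℝ := fun k => if k = j then 0 else sk k * x k with hydef
  set cc : Fin d → ℝ := fun k => if k = j then 0 else (sk k)⁻¹ * (u k ⬝ᵥ (E *ᵥ u j))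
    with hccdef
  set wf : Fin d → ℝ := ∑ l, ((τ l)⁻¹ * x l) • u l with hwfdef
  set w1 : Fin d → ℝ := ∑ l ∈ Sc, y l • u l with hw1def
  have hkey : ∀ k, (lamh j - lam k) * x k = (τ k)⁻¹ * (u k ⬝ᵥ (F *ᵥ wf)) := by
    intro k
    rw [← hE1 k]
    nth_rewrite 1 [hexp]
    rw [Stmt6Aux.mulVec_sum_smul, Stmt6Aux.dotP_sum, hwfdef,
      Stmt6Aux.mulVec_sum_smul, Stmt6Aux.dotP_sum, Finset.mul_sum]
    refine Finset.sum_congr rfl fun l _ => ?_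
    rw [dotProduct_smul, dotProduct_smul, hMkl k l]
    simp only [smul_eq_mul]
    have h1 : τ k ≠ 0 := ne_of_gt (hτpos k)
    have h2 : τ l ≠ 0 := ne_of_gt (hτpos l)
    field_simp
  
  have hykD : ∀ k, k ≠ j → y k * (lamh j - lam k) = |lam k - lam j| * (u k ⬝ᵥ (F *ᵥ wf)) := by
    intro k hk
    have h1 := hkey k
    rw [hτinvk k hk] at h1
    have hy : y k = sk k * x k := by simp [hydef, hk]
    calc y k * (lamh j - lam k) = sk k * ((lamh j - lam k) * x k) := by rw [hy]; ring
      _ = sk k * (sk k * (u k ⬝ᵥ (F *ᵥ wf))) := by rw [h1]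
      _ = |lam k - lam j| * (u k ⬝ᵥ (F *ᵥ wf)) := by rw [← mul_assoc, hsksq]
  set β : Fin d → ℝ := fun k => |lam k - lam j| / (lamh j - lam k) with hβdef
  have hDne : ∀ k, k ≠ j → lamh j - lam k ≠ 0 := by
    intro k hk
    have h0 := hgap0 k hk
    intro h; rw [h] at h0; simp at h0
  have hyβ : ∀ k, k ≠ j → y k = β k * (u k ⬝ᵥ (F *ᵥ wf)) := by
    intro k hk
    have h1 := hykD k hk
    have h2 := hDne k hk
    simp only [hβdef]
    rw [div_mul_eq_mul_div, eq_div_iff h2]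
    linarith [h1]
  have hβle : ∀ k, k ≠ j → |β k| ≤ (1 - δ)⁻¹ := by
    intro k hk
    simp only [hβdef]
    rw [abs_div, div_le_iff₀ (hgap0 k hk)]
    have h1 := hgap k hk
    have h2 : (1-δ)⁻¹ * ((1-δ) * |lam k - lam j|) = |lam k - lam j| := by
      field_simp
    calc |(|lam k - lam j|)| = |lam k - lam j| := abs_abs _
      _ = (1-δ)⁻¹ * ((1-δ) * |lam k - lam j|) := h2.symm
      _ ≤ (1-δ)⁻¹ * |lamh j - lam k| :=
          mul_le_mul_of_nonneg_left h1 (inv_nonneg.mpr hδ1.le)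
  have hmemSc : ∀ k, k ∈ Sc ↔ k ≠ j := by intro k; simp [hScdef]
  have hwfsplit : wf = w1 + (Real.sqrt gj * x j) • u j := by
    rw [hwfdef, hw1def]
    rw [← Finset.add_sum_erase _ _ (Finset.mem_univ j)]
    rw [hτinvj]
    have hSc : Finset.univ.erase j = Sc := by
      rw [hScdef]; ext k; simp [Finset.mem_erase]
    rw [hSc, add_comm]
    congr 1
    refine Finset.sum_congr rfl fun l hl => ?_
    have hlj : l ≠ j := (hmemSc l).mp hl
    rw [hτinvk l hlj]
    congr 1
    simp [hydef, hlj]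
  have hMk2 : ∀ k, k ≠ j → u k ⬝ᵥ (F *ᵥ wf) = u k ⬝ᵥ (F *ᵥ w1) + x j * cc k := by
    intro k hk
    rw [hwfsplit, Matrix.mulVec_add, dotProduct_add, Stmt6Aux.mulVec_smul', dotProduct_smul]
    congr 1
    rw [smul_eq_mul, hMkl k j]
    have hcc : cc k = (sk k)⁻¹ * (u k ⬝ᵥ (E *ᵥ u j)) := by simp [hccdef, hk]
    have hτk : τ k = (sk k)⁻¹ := by simp [hτdef, hk]
    have hτj : τ j = (Real.sqrt gj)⁻¹ := by simp [hτdef]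
    rw [hcc, hτk, hτj]
    have hskne : sk k ≠ 0 := ne_of_gt (hskpos k hk)
    have hsgne : Real.sqrt gj ≠ 0 := ne_of_gt hsg
    field_simp
  set N2 : ℝ := ∑ k ∈ Sc, y k ^ 2 with hN2def
  set C2 : ℝ := ∑ k ∈ Sc, cc k ^ 2 with hC2def
  have hN2nn : 0 ≤ N2 := Finset.sum_nonneg fun k _ => sq_nonneg _
  have hC2nn : 0 ≤ C2 := Finset.sum_nonneg fun k _ => sq_nonneg _
  set N := Real.sqrt N2 with hNdef
  set C := Real.sqrt C2 with hCdef
  have hNnn : 0 ≤ N := Real.sqrt_nonneg _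
  have hCnn : 0 ≤ C := Real.sqrt_nonneg _
  have hNsq : N^2 = N2 := Real.sq_sqrt hN2nn
  set p : Fin d → ℝ := ∑ k ∈ Sc, (β k * y k) • u k with hpdef
  have hid : N2 = p ⬝ᵥ (F *ᵥ w1) + x j * ∑ k ∈ Sc, (β k * y k) * cc k := by
    have h1 : p ⬝ᵥ (F *ᵥ w1) = ∑ k ∈ Sc, (β k * y k) * (u k ⬝ᵥ (F *ᵥ w1)) := by
      rw [hpdef, Stmt6Aux.sum_dotP]
      exact Finset.sum_congr rfl fun k _ => by rw [smul_dotProduct, smul_eq_mul]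
    rw [h1, Finset.mul_sum, ← Finset.sum_add_distrib, hN2def]
    refine Finset.sum_congr rfl fun k hk => ?_
    have hk' : k ≠ j := (hmemSc k).mp hk
    rw [sq]
    nth_rewrite 2 [hyβ k hk']
    rw [hMk2 k hk']
    ring
  have hsum_beta : ∑ k ∈ Sc, (β k * y k)^2 ≤ (1-δ)⁻¹^2 * N2 := by
    rw [hN2def, Finset.mul_sum]
    refine Finset.sum_le_sum fun k hk => ?_
    have h1 := hβle k ((hmemSc k).mp hk)
    have h2 : (β k * y k)^2 = (|β k|)^2 * y k ^2 := by rw [mul_pow, sq_abs]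
    rw [h2]
    have h3 : (|β k|)^2 ≤ ((1-δ)⁻¹)^2 := by nlinarith [abs_nonneg (β k)]
    nlinarith [sq_nonneg (y k)]
  have hppnn : (0:ℝ) ≤ ∑ k ∈ Sc, (β k * y k)^2 := Finset.sum_nonneg fun k _ => sq_nonneg _
  have hsqrtp : Real.sqrt (∑ k ∈ Sc, (β k * y k)^2) ≤ (1-δ)⁻¹ * N := by
    rw [hNdef, ← Real.sqrt_sq (inv_nonneg.mpr hδ1.le), ← Real.sqrt_mul (sq_nonneg _)]
    exact Real.sqrt_le_sqrt hsum_beta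
  have hterm1 : |p ⬝ᵥ (F *ᵥ w1)| ≤ δ * ((1-δ)⁻¹ * N) * N := by
    have h1 := hFb p w1
    have hpp : p ⬝ᵥ p = ∑ k ∈ Sc, (β k * y k)^2 := by rw [hpdef]; exact hzz Sc _
    have hww : w1 ⬝ᵥ w1 = N2 := by rw [hw1def, hN2def]; exact hzz Sc y
    rw [hpp, hww] at h1
    calc |p ⬝ᵥ (F *ᵥ w1)| ≤ δ * Real.sqrt (∑ k ∈ Sc, (β k * y k)^2) * Real.sqrt N2 := h1
      _ ≤ δ * ((1-δ)⁻¹ * N) * N := by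
          rw [← hNdef]
          exact mul_le_mul_of_nonneg_right (mul_le_mul_of_nonneg_left hsqrtp hδ0) hNnn
  have hterm2 : |∑ k ∈ Sc, (β k * y k) * cc k| ≤ (1-δ)⁻¹ * N * C := by
    have h1 := Finset.sum_mul_sq_le_sq_mul_sq Sc (fun k => β k * y k) cc
    rw [show |∑ k ∈ Sc, (β k * y k) * cc k|
        = Real.sqrt ((∑ k ∈ Sc, (β k * y k) * cc k)^2) from (Real.sqrt_sq_eq_abs _).symm]
    calc Real.sqrt ((∑ k ∈ Sc, (β k * y k) * cc k)^2)
        ≤ Real.sqrt ((∑ k ∈ Sc, (β k * y k)^2) * C2) :=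
          Real.sqrt_le_sqrt (by rw [hC2def]; exact h1)
      _ = Real.sqrt (∑ k ∈ Sc, (β k * y k)^2) * C := by rw [Real.sqrt_mul hppnn, hCdef]
      _ ≤ ((1-δ)⁻¹ * N) * C := mul_le_mul_of_nonneg_right hsqrtp hCnn
      _ = (1-δ)⁻¹ * N * C := by ring
  have hmain : N2 ≤ δ * ((1-δ)⁻¹ * N) * N + (1-δ)⁻¹ * N * C := by
    rw [hid]
    have h1 := abs_le.mp hterm1
    have h2 : |x j * ∑ k ∈ Sc, (β k * y k) * cc k| ≤ (1-δ)⁻¹ * N * C := by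
      rw [abs_mul]
      calc |x j| * |∑ k ∈ Sc, (β k * y k) * cc k| ≤ 1 * ((1-δ)⁻¹ * N * C) :=
            mul_le_mul hxj1 hterm2 (abs_nonneg _) zero_le_one
        _ = (1-δ)⁻¹ * N * C := one_mul _
    have h4 := abs_le.mp h2
    linarith [h1.2, h4.2]
  have hfinal : (1 - 2*δ) * N ≤ C := by
    have hB : (1-δ) * (1-δ)⁻¹ = 1 := mul_inv_cancel₀ (ne_of_gt hδ1)
    have h4 : (1-δ) * N2 ≤ δ * N2 + N * C := by
      have h5 := mul_le_mul_of_nonneg_left hmain hδ1.le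
      calc (1-δ)*N2 ≤ (1-δ)*(δ * ((1-δ)⁻¹ * N) * N + (1-δ)⁻¹ * N * C) := h5
        _ = δ * ((1-δ)*(1-δ)⁻¹) * (N * N) + ((1-δ)*(1-δ)⁻¹) * (N * C) := by ring
        _ = δ * N2 + N * C := by rw [hB, ← hNsq]; ring
    rcases eq_or_lt_of_le hNnn with h0 | h0
    · rw [← h0]; simpa using hCnn
    · have h5 : (1-2*δ) * N2 ≤ N * C := by linarith
      rw [← hNsq] at h5
      nlinarith [h5, h0]
  -- endgame
  have hone : uh j ⬝ᵥ uh j = 1 := by simpa using hONh j j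
  have honej : u j ⬝ᵥ u j = 1 := by simpa using hON j j
  rw [Stmt6Aux.hsNorm_mul_proj _ _ hone, Stmt6Aux.hsNorm_mul_proj _ _ honej]
  have hLHS : invSqrtAbsRes lam u j *ᵥ uh j = w1 := by
    unfold invSqrtAbsRes
    rw [Stmt6Aux.matsum_mulVec, hw1def]
    refine Finset.sum_congr (by rw [hScdef]) fun l hl => ?_
    have hlj : l ≠ j := (hmemSc l).mp hl
    rw [smul_mulVec, Stmt6Aux.proj_mulVec, smul_smul]
    congr 1
    simp [hydef, hxdef, hskdef, hlj]
  have hRHS : (sqrtAbsRes lam u j * E) *ᵥ u j = ∑ l ∈ Sc, cc l • u l := by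
    rw [← Matrix.mulVec_mulVec]
    unfold sqrtAbsRes
    rw [Stmt6Aux.matsum_mulVec]
    refine Finset.sum_congr (by rw [hScdef]) fun l hl => ?_
    have hlj : l ≠ j := (hmemSc l).mp hl
    rw [smul_mulVec, Stmt6Aux.proj_mulVec, smul_smul]
    congr 1
    simp [hccdef, hskdef, hlj]
  rw [hLHS, hRHS]
  have h6 : w1 ⬝ᵥ w1 = N2 := by rw [hw1def, hN2def]; exact hzz Sc y
  have h7 : (∑ l ∈ Sc, cc l • u l) ⬝ᵥ (∑ l ∈ Sc, cc l • u l) = C2 := by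
    rw [hC2def]; exact hzz Sc cc
  rw [h6, h7, ← hNdef, ← hCdef]
  rw [le_div_iff₀ (by linarith : (0:ℝ) < 1 - 2*δ)]
  linarith [hfinal]
end
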